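/- arXiv:1012.2503 — 2 statements merged into one kernel-verified Lean document; each statement's English description precedes it below -/
import Mathlib

section
/- For every ε > 0, the annealed probability 𝐏(|T_N − T̃_N|/N^{1/s} > ε) tends to 0 as N → ∞; that is, the occupation time of [0,N) and the hitting time of N have the same asymptotic behaviour at scale N^{1/s}. -/
open MeasureTheory ProbabilityTheory Filter Set
open scoped ENNReal NNReal Topology Classical

noncomputable section

namespace RWRE

/-- The space of environments: an assignment of a probability `ω i` to each site `i`. -/
abbrev Env : Type := ℤ → ℝ

/-- The space of trajectories of the walk. -/
abbrev Traj : Type := ℕ → ℤ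

/-- `alpha ω i = q_i / p_i`. -/
def alpha (ω : Env) (i : ℤ) : ℝ := (1 - ω i) / ω i

/-- The number of visits of the trajectory `X` to the site `n` (the start counts as a visit). -/
def visits (X : Traj) (n : ℤ) : ℕ := Set.ncard {t : ℕ | X t = n}

/-- The occupation time `T_N` of `[0, N)`. -/
def occTime (X : Traj) (N : ℕ) : ℕ := ∑ n ∈ Finset.range N, visits X (n : ℤ)

/-- The hitting time `T̃_N` of the site `N`. -/
def hitTime (X : Traj) (N : ℕ) : ℕ := sInf {t : ℕ | X t = (N : ℤ)}

/-- `μ` is the law of the nearest-neighbour random walk on `ℤ` in the environment `ω`,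
starting at `0`: from a site `x` the walk jumps to `x+1` with probability `ω x` and to
`x-1` with probability `1 - ω x`. -/
structure IsQuenchedLaw (ω : Env) (μ : Measure Traj) : Prop where
  prob : IsProbabilityMeasure μ
  start : μ {X | X 0 = 0} = 1
  nearest : μ {X | ∀ t, X (t+1) = X t + 1 ∨ X (t+1) = X t - 1} = 1
  step : ∀ (n : ℕ) (x : Traj),
    μ {X | (∀ k ≤ n, X k = x k) ∧ X (n+1) = x n + 1}
      = ENNReal.ofReal (ω (x n)) * μ {X | ∀ k ≤ n, X k = x k}

/-- `ρ_n`: the quenched expectation of the number of visits to `n`. -/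
def rho (Pq : Env → Measure Traj) (ω : Env) (n : ℤ) : ℝ :=
  ∫ X, (visits X n : ℝ) ∂(Pq ω)

/-- `𝔼_ω (T_N)`: the quenched expectation of the occupation time of `[0,N)`. -/
def qET (Pq : Env → Measure Traj) (ω : Env) (N : ℕ) : ℝ :=
  ∫ X, (occTime X N : ℝ) ∂(Pq ω)

/-- Covariance of two real random variables. -/
def mCov {α : Type*} [MeasurableSpace α] (μ : Measure α) (f g : α → ℝ) : ℝ :=
  ∫ x, f x * g x ∂μ - (∫ x, f x ∂μ) * (∫ x, g x ∂μ)

/-- Correlation coefficient of two real random variables. -/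
def mCorr {α : Type*} [MeasurableSpace α] (μ : Measure α) (f g : α → ℝ) : ℝ :=
  mCov μ f g / (Real.sqrt (mCov μ f f) * Real.sqrt (mCov μ g g))

/-- Assumptions on the i.i.d. random environment: (A) positive drift of the log-ratios,
(B) the Kesten root `s`, (C) uniform ellipticity, (D) non-arithmeticity of `log (q/p)`. -/
structure EnvHyp (P : Measure Env) (s : ℝ) : Prop where
  prob : IsProbabilityMeasure P
  indep : iIndepFun (fun i (ω : Env) => ω i) P
  ident : ∀ i : ℤ, IdentDistrib (fun ω : Env => ω i) (fun ω : Env => ω 0) P P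
  elliptic : ∃ ε₀ > 0, ∀ᵐ ω ∂P, ∀ i, ε₀ ≤ ω i ∧ ω i ≤ 1 - ε₀
  drift : 0 < ∫ ω, Real.log (ω 0 / (1 - ω 0)) ∂P
  spos : 0 < s
  crit : ∫ ω, (alpha ω 0) ^ s ∂P = 1
  nonarith : ¬ ∃ a : ℝ, ∀ᵐ ω ∂P, ∃ k : ℤ, Real.log (alpha ω 0) = (k : ℝ) * a

/-- `Pq` is a measurable family of quenched walk laws over the environment law `P`. -/
structure WalkHyp (P : Measure Env) (Pq : Env → Measure Traj) : Prop where
  quenched : ∀ᵐ ω ∂P, IsQuenchedLaw ω (Pq ω)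
  meas : ∀ A : Set Traj, MeasurableSet A → Measurable fun ω => Pq ω A

/-! ### Auxiliary development -/

section Aux

open MeasurableSpace

/-- Shift of an environment. -/
def shiftE (x : ℤ) (ω : Env) : Env := fun i => ω (i + x)

@[simp] lemma shiftE_apply (x : ℤ) (ω : Env) (i : ℤ) : shiftE x ω i = ω (i + x) := rfl

lemma shiftE_zero (ω : Env) : shiftE 0 ω = ω := by funext i; simp [shiftE]

lemma shiftE_shiftE (x y : ℤ) (ω : Env) : shiftE y (shiftE x ω) = shiftE (x + y) ω := by
  funext i; simp [shiftE, add_assoc, add_comm x y]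

lemma alpha_shiftE (x : ℤ) (ω : Env) (i : ℤ) : alpha (shiftE x ω) i = alpha ω (i + x) := rfl

/-- One-step transition weight. -/
def stepw (ω : Env) (a b : ℤ) : ℝ :=
  if b = a + 1 then ω a else if b = a - 1 then 1 - ω a else 0

/-- Cylinder set of trajectories with prescribed prefix of length `k`. -/
def cyl (k : ℕ) (z : ℕ → ℤ) : Set Traj := {X | ∀ j ≤ k, X j = z j}

/-- Weight of a prefix. -/
def wgt (ω : Env) (k : ℕ) (z : ℕ → ℤ) : ℝ :=
  (if z 0 = 0 then 1 else 0) * ∏ j ∈ Finset.range k, stepw ω (z j) (z (j+1))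

/-- Shift/translation of a trajectory. -/
def shiftT (k : ℕ) (c : ℤ) (X : Traj) : Traj := fun t => X (t + k) - c

def startSet : Set Traj := {X | X 0 = 0}

def nearestSet : Set Traj := {X | ∀ t, X (t+1) = X t + 1 ∨ X (t+1) = X t - 1}

def hitSet (c : ℤ) : Set Traj := {X | ∃ t, X t = c}

/-- Hit `c` before `d`. -/
def hitBefore (c d : ℤ) : Set Traj := {X | ∃ t, X t = c ∧ ∀ u ≤ t, X u ≠ d}

def noExitE (c d : ℤ) : Set Traj := {X | ∀ t, X t ≠ c ∧ X t ≠ d}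

/-- `m+1` distinct times at negative sites. -/
def Em (m : ℕ) : Set Traj := {X | ∃ T : Finset ℕ, T.card = m + 1 ∧ ∀ t ∈ T, X t < 0}

/-- Product of `alpha` over sites `a+1, …, a+k`. -/
def sprod (ω : Env) (a : ℤ) (k : ℕ) : ℝ := ∏ i ∈ Finset.range k, alpha ω (a + 1 + i)

def Ssum (ω : Env) (a : ℤ) (j : ℕ) : ℝ := ∑ m ∈ Finset.range j, sprod ω a m

/-- Sum of the convergent series of right products. -/
def Sinf (ω : Env) : ℝ := ∑' k, sprod ω 0 k

/-- A good environment. -/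
structure GoodEnv (Pq : Env → Measure Traj) (ω : Env) : Prop where
  pos : ∀ i, 0 < ω i
  lt1 : ∀ i, ω i < 1
  law : ∀ x : ℤ, IsQuenchedLaw (shiftE x ω) (Pq (shiftE x ω))
  summ0 : Summable (fun k => sprod ω 0 k)
  left0 : Tendsto (fun m : ℕ => sprod ω (-(m:ℤ)) m) atTop (𝓝 0)

/-! #### Measurability -/

lemma measurableSet_eval (n : ℕ) (A : Set ℤ) : MeasurableSet {X : Traj | X n ∈ A} :=
  (measurable_pi_apply n) (by trivial)

lemma measurableSet_cyl (k : ℕ) (z : ℕ → ℤ) : MeasurableSet (cyl k z) := by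
  have : cyl k z = ⋂ j, ⋂ (_ : j ≤ k), {X : Traj | X j = z j} := by
    ext X; simp [cyl, Set.mem_iInter]
  rw [this]
  exact MeasurableSet.iInter fun j => MeasurableSet.iInter fun _ =>
    measurableSet_eval j {z j}

lemma measurable_shiftT (k : ℕ) (c : ℤ) : Measurable (shiftT k c) := by
  apply measurable_pi_lambda
  intro t
  exact (measurable_pi_apply (t + k)).sub measurable_const

lemma measurableSet_startSet : MeasurableSet startSet := measurableSet_eval 0 {0}

lemma measurableSet_nearestSet : MeasurableSet nearestSet := by
  have : nearestSet = ⋂ t, {X : Traj | X (t+1) = X t + 1 ∨ X (t+1) = X t - 1} := by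
    ext X; simp [nearestSet, Set.mem_iInter]
  rw [this]
  refine MeasurableSet.iInter fun t => ?_
  have h1 : MeasurableSet {X : Traj | X (t+1) = X t + 1} := by
    have : {X : Traj | X (t+1) = X t + 1} = (fun X : Traj => X (t+1) - X t) ⁻¹' {1} := by
      ext X; simp [sub_eq_iff_eq_add]; constructor <;> intro h <;> omega
    rw [this]
    exact ((measurable_pi_apply (t+1)).sub (measurable_pi_apply t)) (by trivial)
  have h2 : MeasurableSet {X : Traj | X (t+1) = X t - 1} := by
    have : {X : Traj | X (t+1) = X t - 1} = (fun X : Traj => X (t+1) - X t) ⁻¹' {-1} := by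
      ext X; simp [sub_eq_iff_eq_add]; constructor <;> intro h <;> omega
    rw [this]
    exact ((measurable_pi_apply (t+1)).sub (measurable_pi_apply t)) (by trivial)
  exact h1.union h2

lemma measurableSet_hitSet (c : ℤ) : MeasurableSet (hitSet c) := by
  have : hitSet c = ⋃ t, {X : Traj | X t = c} := by ext X; simp [hitSet]
  rw [this]; exact MeasurableSet.iUnion fun t => measurableSet_eval t {c}

lemma measurableSet_hitBefore (c d : ℤ) : MeasurableSet (hitBefore c d) := by
  have : hitBefore c d =
      ⋃ t, ({X : Traj | X t = c} ∩ ⋂ u, ⋂ (_ : u ≤ t), {X : Traj | X u ≠ d}) := by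
    ext X; simp [hitBefore, Set.mem_iInter]
  rw [this]
  refine MeasurableSet.iUnion fun t => (measurableSet_eval t {c}).inter ?_
  exact MeasurableSet.iInter fun u => MeasurableSet.iInter fun _ =>
    (measurableSet_eval u {d}).compl

lemma measurableSet_noExitE (c d : ℤ) : MeasurableSet (noExitE c d) := by
  have : noExitE c d = ⋂ t, ({X : Traj | X t ≠ c} ∩ {X : Traj | X t ≠ d}) := by
    ext X; simp [noExitE, Set.mem_iInter, forall_and]
  rw [this]
  exact MeasurableSet.iInter fun t =>
    ((measurableSet_eval t {c}).compl).inter ((measurableSet_eval t {d}).compl)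

lemma measurableSet_Em (m : ℕ) : MeasurableSet (Em m) := by
  have : Em m = ⋃ (T : Finset ℕ) (_ : T.card = m + 1), ⋂ t ∈ T, {X : Traj | X t < 0} := by
    ext X; simp [Em, Set.mem_iUnion, Set.mem_iInter]
  rw [this]
  refine MeasurableSet.iUnion fun T => MeasurableSet.iUnion fun _ => ?_
  exact MeasurableSet.biInter T.countable_toSet fun t _ => measurableSet_eval t {x | x < 0}

/-! #### The cylinder π-system on trajectories -/

def cylSys : Set (Set Traj) := {S | ∃ k z, S = cyl k z}

lemma cyl_mem_cylSys (k : ℕ) (z : ℕ → ℤ) : cyl k z ∈ cylSys := ⟨k, z, rfl⟩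

lemma isPiSystem_cylSys : IsPiSystem cylSys := by
  have key : ∀ k m (z w : ℕ → ℤ), k ≤ m → (cyl k z ∩ cyl m w).Nonempty →
      cyl k z ∩ cyl m w ∈ cylSys := by
    rintro k m z w hkm ⟨X, hX1, hX2⟩
    refine ⟨m, w, ?_⟩
    apply Set.Subset.antisymm Set.inter_subset_right
    intro Y hY
    refine ⟨fun j hj => ?_, hY⟩
    rw [hY j (hj.trans hkm), ← hX2 j (hj.trans hkm), hX1 j hj]
  rintro _ ⟨k, z, rfl⟩ _ ⟨m, w, rfl⟩ hne
  rcases le_total k m with h | h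
  · exact key k m z w h hne
  · rw [Set.inter_comm] at hne ⊢
    exact key m k w z h hne

lemma generateFrom_cylSys :
    (inferInstance : MeasurableSpace Traj) = MeasurableSpace.generateFrom cylSys := by
  apply le_antisymm
  · have hmeas : ∀ n : ℕ,
        @Measurable Traj ℤ (MeasurableSpace.generateFrom cylSys) _ (fun X => X n) := by
      intro n s _
      have hset : (fun X : Traj => X n) ⁻¹' s =
          ⋃ (v : {v : Fin (n+1) → ℤ // v ⟨n, Nat.lt_succ_self n⟩ ∈ s}),
            cyl n (fun j => if h : j < n + 1 then (v : Fin (n+1) → ℤ) ⟨j, h⟩ else 0) := by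
        ext X
        constructor
        · intro hX
          refine Set.mem_iUnion.mpr ⟨⟨fun j => X j, hX⟩, fun j hj => ?_⟩
          simp [Nat.lt_succ_of_le hj]
        · intro hX
          obtain ⟨v, hv⟩ := Set.mem_iUnion.mp hX
          have h2 := hv n le_rfl
          simp only [Nat.lt_succ_self, dif_pos] at h2
          simpa [Set.mem_preimage, h2] using v.2
      rw [hset]
      exact MeasurableSet.iUnion fun v => measurableSet_generateFrom ⟨n, _, rfl⟩
    have hid : @Measurable Traj Traj (MeasurableSpace.generateFrom cylSys)
        MeasurableSpace.pi id :=
      (@measurable_pi_iff Traj ℕ (fun _ => ℤ) (MeasurableSpace.generateFrom cylSys) _ id).mpr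
        hmeas
    intro s hs
    exact hid hs
  · exact MeasurableSpace.generateFrom_le (by rintro _ ⟨k, z, rfl⟩; exact measurableSet_cyl k z)

/-! #### Finite-dimensional distributions -/

lemma compl_null_of_one {μ : Measure Traj} [IsProbabilityMeasure μ] {A : Set Traj}
    (hA : MeasurableSet A) (h1 : μ A = 1) : μ Aᶜ = 0 := by
  rw [measure_compl hA (measure_ne_top μ A), h1, measure_univ, tsub_self]

lemma cyl_zero (z : ℕ → ℤ) : cyl 0 z = {X : Traj | X 0 = z 0} := by
  ext X; simp [cyl, Nat.le_zero]

lemma cyl_succ (k : ℕ) (z : ℕ → ℤ) :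
    cyl (k+1) z = cyl k z ∩ {X : Traj | X (k+1) = z (k+1)} := by
  ext X
  constructor
  · intro h; exact ⟨fun j hj => h j (hj.trans (Nat.le_succ k)), h (k+1) le_rfl⟩
  · rintro ⟨h1, h2⟩ j hj
    rcases (by omega : j ≤ k ∨ j = k + 1) with h | h
    · exact h1 j h
    · rw [h]; exact h2

lemma start_compl_null {ω : Env} {μ : Measure Traj} (h : IsQuenchedLaw ω μ) :
    μ {X : Traj | X 0 = 0}ᶜ = 0 := by
  haveI := h.prob
  exact compl_null_of_one measurableSet_startSet h.start

lemma nearest_compl_null {ω : Env} {μ : Measure Traj} (h : IsQuenchedLaw ω μ) :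
    μ nearestSetᶜ = 0 := by
  haveI := h.prob
  exact compl_null_of_one measurableSet_nearestSet h.nearest

lemma wgt_nonneg {ω : Env} (hb : ∀ i, 0 ≤ ω i ∧ ω i ≤ 1) (k : ℕ) (z : ℕ → ℤ) :
    0 ≤ wgt ω k z := by
  apply mul_nonneg
  · split_ifs <;> norm_num
  · refine Finset.prod_nonneg fun j _ => ?_
    unfold stepw
    split_ifs with h1 h2
    · exact (hb _).1
    · linarith [(hb (z j)).2]
    · exact le_refl 0

lemma meas_cyl {ω : Env} {μ : Measure Traj} (h : IsQuenchedLaw ω μ)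
    (hb : ∀ i, 0 ≤ ω i ∧ ω i ≤ 1) (k : ℕ) (z : ℕ → ℤ) :
    μ (cyl k z) = ENNReal.ofReal (wgt ω k z) := by
  haveI := h.prob
  induction k with
  | zero =>
    rw [cyl_zero]
    by_cases h0 : z 0 = 0
    · have he : {X : Traj | X 0 = z 0} = {X : Traj | X 0 = 0} := by rw [h0]
      rw [he, h.start]
      simp [wgt, h0]
    · have hsub : {X : Traj | X 0 = z 0} ⊆ {X : Traj | X 0 = 0}ᶜ := by
        intro X hX hX0
        simp only [Set.mem_setOf_eq] at hX hX0
        exact h0 (by omega)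
      have hz : μ {X : Traj | X 0 = z 0} = 0 :=
        le_antisymm ((measure_mono hsub).trans (le_of_eq (start_compl_null h))) zero_le
      rw [hz]
      simp [wgt, h0]
  | succ k ih =>
    have hwgt : wgt ω (k+1) z = wgt ω k z * stepw ω (z k) (z (k+1)) := by
      simp [wgt, Finset.prod_range_succ, mul_assoc]
    by_cases hup : z (k+1) = z k + 1
    · have hsetA : cyl (k+1) z = {X | (∀ j ≤ k, X j = z j) ∧ X (k+1) = z k + 1} := by
        rw [cyl_succ]
        ext X
        simp only [cyl, Set.mem_inter_iff, Set.mem_setOf_eq, hup]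
      rw [hsetA, h.step k z]
      have hcyl : {X : Traj | ∀ j ≤ k, X j = z j} = cyl k z := rfl
      rw [hcyl, ih, ← ENNReal.ofReal_mul (hb (z k)).1, hwgt]
      congr 1
      have : stepw ω (z k) (z (k+1)) = ω (z k) := by simp [stepw, hup]
      rw [this]; ring
    · by_cases hdn : z (k+1) = z k - 1
      · set A := cyl k z with hA
        have hAm : MeasurableSet A := measurableSet_cyl k z
        have hUm : MeasurableSet {X : Traj | X (k+1) = z k + 1} := measurableSet_eval (k+1) {z k + 1}
        have hDm : MeasurableSet {X : Traj | X (k+1) = z k - 1} := measurableSet_eval (k+1) {z k - 1}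
        have hU : μ (A ∩ {X | X (k+1) = z k + 1}) = ENNReal.ofReal (ω (z k)) * μ A := by
          have he : A ∩ {X : Traj | X (k+1) = z k + 1}
              = {X | (∀ j ≤ k, X j = z j) ∧ X (k+1) = z k + 1} := by
            ext X
            simp only [hA, cyl, Set.mem_inter_iff, Set.mem_setOf_eq]
          rw [he, h.step k z]
          rfl
        have hsplit : μ (A ∩ {X | X (k+1) = z k + 1}) + μ (A ∩ {X | X (k+1) = z k - 1}) = μ A := by
          have hrest : μ (A \ ({X : Traj | X (k+1) = z k + 1} ∪ {X | X (k+1) = z k - 1})) = 0 := by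
            refine le_antisymm (le_trans (measure_mono ?_) (le_of_eq (nearest_compl_null h))) zero_le
            rintro X ⟨hXA, hXn⟩ hnear
            apply hXn
            have hk : X k = z k := hXA k le_rfl
            simp only [Set.mem_union, Set.mem_setOf_eq]
            rcases hnear k with hh | hh
            · exact Or.inl (by omega)
            · exact Or.inr (by omega)
          have hdisj : Disjoint (A ∩ {X : Traj | X (k+1) = z k + 1}) (A ∩ {X | X (k+1) = z k - 1}) := by
            apply Set.disjoint_left.mpr
            rintro X ⟨_, h1⟩ ⟨_, h2⟩
            rw [Set.mem_setOf_eq] at h1 h2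
            omega
          have hiad := measure_inter_add_diff (μ := μ)
            (t := {X : Traj | X (k+1) = z k + 1} ∪ {X | X (k+1) = z k - 1}) A (hUm.union hDm)
          rw [Set.inter_union_distrib_left] at hiad
          rw [measure_union hdisj (hAm.inter hDm)] at hiad
          rw [hrest, add_zero] at hiad
          exact hiad
        have hD : μ (A ∩ {X | X (k+1) = z k - 1}) = ENNReal.ofReal (1 - ω (z k)) * μ A := by
          have h1 : μ (A ∩ {X | X (k+1) = z k - 1}) = μ A - ENNReal.ofReal (ω (z k)) * μ A := by
            rw [← hU]
            exact ENNReal.eq_sub_of_add_eq (measure_ne_top μ _) (by rw [add_comm]; exact hsplit)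
          rw [h1]
          have h2 : (1 - ENNReal.ofReal (ω (z k))) * μ A = 1 * μ A - ENNReal.ofReal (ω (z k)) * μ A :=
            ENNReal.sub_mul (fun _ _ => measure_ne_top μ A)
          rw [one_mul] at h2
          rw [← h2]
          congr 1
          rw [ENNReal.ofReal_sub 1 (hb (z k)).1, ENNReal.ofReal_one]
        have hsetD : cyl (k+1) z = A ∩ {X | X (k+1) = z k - 1} := by
          rw [cyl_succ]
          ext X
          simp only [hA, cyl, Set.mem_inter_iff, Set.mem_setOf_eq, hdn]
        rw [hsetD, hD, ih, ← ENNReal.ofReal_mul (by linarith [(hb (z k)).2]), hwgt]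
        congr 1
        have hne : ¬ (z k - 1 = z k + 1) := by omega
        have : stepw ω (z k) (z (k+1)) = 1 - ω (z k) := by
          rw [hdn]; simp [stepw, hne]
        rw [this]; ring
      · have hsub : cyl (k+1) z ⊆ nearestSetᶜ := by
          intro X hX hnear
          have hk := hX k (Nat.le_succ k)
          have hk1 := hX (k+1) le_rfl
          rcases hnear k with hh | hh
          · exact hup (by rw [← hk1, hh, hk])
          · exact hdn (by rw [← hk1, hh, hk])
        have hz : μ (cyl (k+1) z) = 0 :=
          le_antisymm ((measure_mono hsub).trans (le_of_eq (nearest_compl_null h))) zero_le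
        rw [hz, hwgt]
        have : stepw ω (z k) (z (k+1)) = 0 := by simp [stepw, hup, hdn]
        rw [this, mul_zero, ENNReal.ofReal_zero]

/-! #### The Markov property -/

/-- Concatenation of a prefix with a translated continuation. -/
def glue (k : ℕ) (z : ℕ → ℤ) (c : ℤ) (w : ℕ → ℤ) : ℕ → ℤ :=
  fun j => if j ≤ k then z j else w (j - k) + c

lemma cyl_glue (k m : ℕ) (z w : ℕ → ℤ) (hw0 : w 0 = 0) :
    cyl k z ∩ shiftT k (z k) ⁻¹' cyl m w = cyl (k+m) (glue k z (z k) w) := by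
  ext X
  simp only [cyl, glue, Set.mem_inter_iff, Set.mem_preimage, Set.mem_setOf_eq, shiftT]
  constructor
  · rintro ⟨h1, h2⟩ j hj
    by_cases hjk : j ≤ k
    · rw [if_pos hjk]; exact h1 j hjk
    · rw [if_neg hjk]
      push_neg at hjk
      have hjm : j - k ≤ m := by omega
      have hh := h2 (j - k) hjm
      have hjkk : j - k + k = j := by omega
      rw [hjkk] at hh
      omega
  · intro hX
    constructor
    · intro j hj
      have := hX j (by omega)
      rwa [if_pos hj] at this
    · intro u hu
      have hXk : X k = z k := by
        have := hX k (by omega)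
        rwa [if_pos le_rfl] at this
      by_cases hu0 : u = 0
      · subst hu0
        rw [zero_add, hXk, hw0]
        omega
      · have hh := hX (u + k) (by omega)
        have hcond : ¬ (u + k ≤ k) := by omega
        rw [if_neg hcond] at hh
        have h2 : u + k - k = u := by omega
        rw [h2] at hh
        omega

lemma wgt_glue (ω : Env) (k m : ℕ) (z w : ℕ → ℤ) (hw0 : w 0 = 0) :
    wgt ω (k+m) (glue k z (z k) w) = wgt ω k z * wgt (shiftE (z k) ω) m w := by
  unfold wgt
  rw [Finset.prod_range_add]
  have h0 : glue k z (z k) w 0 = z 0 := by simp [glue]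
  have hval : ∀ i, glue k z (z k) w (k + i) = w i + z k := by
    intro i
    by_cases hi : i = 0
    · subst hi; simp [glue, hw0]
    · have hcond : ¬ (k + i ≤ k) := by omega
      simp only [glue, if_neg hcond]
      congr 2
      omega
  have hfirst : ∏ j ∈ Finset.range k, stepw ω (glue k z (z k) w j) (glue k z (z k) w (j+1))
      = ∏ j ∈ Finset.range k, stepw ω (z j) (z (j+1)) := by
    refine Finset.prod_congr rfl fun j hj => ?_
    simp only [Finset.mem_range] at hj
    have e1 : glue k z (z k) w j = z j := if_pos (by omega)
    have e2 : glue k z (z k) w (j+1) = z (j+1) := if_pos (by omega)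
    rw [e1, e2]
  have hsecond : ∏ i ∈ Finset.range m, stepw ω (glue k z (z k) w (k+i)) (glue k z (z k) w (k+i+1))
      = ∏ i ∈ Finset.range m, stepw (shiftE (z k) ω) (w i) (w (i+1)) := by
    refine Finset.prod_congr rfl fun i _ => ?_
    rw [hval i, show k + i + 1 = k + (i+1) from rfl, hval (i+1)]
    unfold stepw
    have c1 : (w (i+1) + z k = w i + z k + 1) ↔ (w (i+1) = w i + 1) := by omega
    have c2 : (w (i+1) + z k = w i + z k - 1) ↔ (w (i+1) = w i - 1) := by omega
    simp only [c1, c2, shiftE_apply]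
  rw [hfirst, hsecond, h0, hw0]
  norm_num

lemma markov {ω : Env} {μ ν : Measure Traj} (hμ : IsQuenchedLaw ω μ)
    (hb : ∀ i, 0 ≤ ω i ∧ ω i ≤ 1) (k : ℕ) (z : ℕ → ℤ)
    (hν : IsQuenchedLaw (shiftE (z k) ω) ν) (E : Set Traj) (hE : MeasurableSet E) :
    μ (cyl k z ∩ (shiftT k (z k)) ⁻¹' E) = μ (cyl k z) * ν E := by
  haveI := hμ.prob
  haveI := hν.prob
  have hbν : ∀ i, 0 ≤ shiftE (z k) ω i ∧ shiftE (z k) ω i ≤ 1 := fun i => hb _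
  set m1 : Measure Traj := (μ.restrict (cyl k z)).map (shiftT k (z k)) with hm1
  set m2 : Measure Traj := μ (cyl k z) • ν with hm2
  have hm1app : ∀ (E' : Set Traj), MeasurableSet E' →
      m1 E' = μ (cyl k z ∩ shiftT k (z k) ⁻¹' E') := by
    intro E' hE'
    rw [hm1, Measure.map_apply (measurable_shiftT _ _) hE',
      Measure.restrict_apply (measurable_shiftT _ _ hE'), Set.inter_comm]
  have hm2app : ∀ (E' : Set Traj), m2 E' = μ (cyl k z) * ν E' := by
    intro E'
    rw [hm2, Measure.smul_apply, smul_eq_mul]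
  have key : m1 = m2 := by
    haveI : IsFiniteMeasure m1 := by
      constructor
      rw [hm1app Set.univ MeasurableSet.univ]
      exact (measure_mono (Set.inter_subset_left)).trans_lt (measure_lt_top μ _)
    refine MeasureTheory.ext_of_generate_finite cylSys generateFrom_cylSys isPiSystem_cylSys ?_ ?_
    · rintro _ ⟨m, w, rfl⟩
      rw [hm1app _ (measurableSet_cyl m w), hm2app]
      by_cases hw0 : w 0 = 0
      · rw [cyl_glue k m z w hw0, meas_cyl hμ hb, meas_cyl hμ hb, meas_cyl hν hbν,
          wgt_glue ω k m z w hw0, ENNReal.ofReal_mul (wgt_nonneg hb k z)]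
      · have hempty : cyl k z ∩ shiftT k (z k) ⁻¹' cyl m w = ∅ := by
          ext X
          simp only [Set.mem_inter_iff, Set.mem_empty_iff_false, iff_false, not_and]
          intro h1 h2
          have hh := h2 0 (Nat.zero_le m)
          have hk := h1 k le_rfl
          apply hw0
          simp only [shiftT, zero_add, hk] at hh
          omega
        rw [hempty, measure_empty, meas_cyl hν hbν m w]
        have hzero : wgt (shiftE (z k) ω) m w = 0 := by simp [wgt, hw0]
        rw [hzero, ENNReal.ofReal_zero, mul_zero]
    · rw [hm1app Set.univ MeasurableSet.univ, hm2app, Set.preimage_univ, Set.inter_univ,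
        measure_univ, mul_one]
  rw [← hm1app E hE, key, hm2app]


/-! #### Shift invariance of the environment law -/

def boxSys : Set (Set Env) :=
  {S | ∃ (t : Finset ℤ) (A : ℤ → Set ℝ), (∀ i, MeasurableSet (A i)) ∧
      S = ⋂ i ∈ t, (fun ω : Env => ω i) ⁻¹' A i}

lemma isPiSystem_boxSys : IsPiSystem boxSys := by
  rintro _ ⟨t, A, hA, rfl⟩ _ ⟨t', A', hA', rfl⟩ _
  refine ⟨t ∪ t',
    fun i => (if i ∈ t then A i else Set.univ) ∩ (if i ∈ t' then A' i else Set.univ), ?_, ?_⟩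
  · intro i
    refine MeasurableSet.inter ?_ ?_
    · split_ifs
      · exact hA i
      · exact MeasurableSet.univ
    · split_ifs
      · exact hA' i
      · exact MeasurableSet.univ
  · ext ω
    simp only [Set.mem_inter_iff, Set.mem_iInter, Set.mem_preimage, Finset.mem_union]
    constructor
    · rintro ⟨h1, h2⟩ i hi
      constructor
      · split_ifs with h
        · exact h1 i h
        · trivial
      · split_ifs with h
        · exact h2 i h
        · trivial
    · intro h
      constructor
      · intro i hi
        have := (h i (Or.inl hi)).1
        rwa [if_pos hi] at this
      · intro i hi
        have := (h i (Or.inr hi)).2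
        rwa [if_pos hi] at this

lemma generateFrom_boxSys :
    (inferInstance : MeasurableSpace Env) = MeasurableSpace.generateFrom boxSys := by
  apply le_antisymm
  · have hmeas : ∀ i : ℤ,
        @Measurable Env ℝ (MeasurableSpace.generateFrom boxSys) _ (fun ω => ω i) := by
      intro i S hS
      refine measurableSet_generateFrom ⟨{i}, fun _ => S, fun _ => hS, ?_⟩
      simp
    have hid : @Measurable Env Env (MeasurableSpace.generateFrom boxSys)
        MeasurableSpace.pi id :=
      (@measurable_pi_iff Env ℤ (fun _ => ℝ) (MeasurableSpace.generateFrom boxSys) _ id).mpr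
        hmeas
    intro S hS
    exact hid hS
  · refine MeasurableSpace.generateFrom_le ?_
    rintro _ ⟨t, A, hA, rfl⟩
    exact MeasurableSet.biInter t.countable_toSet fun i _ => (measurable_pi_apply i) (hA i)

lemma measurable_shiftE (x : ℤ) : Measurable (shiftE x) :=
  measurable_pi_lambda _ fun i => measurable_pi_apply (i + x)

lemma map_shiftE {P : Measure Env} {s : ℝ} (hEnv : EnvHyp P s) (x : ℤ) :
    P.map (shiftE x) = P := by
  haveI := hEnv.prob
  haveI : IsProbabilityMeasure (P.map (shiftE x)) :=
    Measure.isProbabilityMeasure_map (measurable_shiftE x).aemeasurable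
  refine MeasureTheory.ext_of_generate_finite boxSys generateFrom_boxSys isPiSystem_boxSys
    ?_ (by simp [measure_univ])
  rintro _ ⟨t, A, hA, rfl⟩
  have hbox : MeasurableSet (⋂ i ∈ t, (fun ω : Env => ω i) ⁻¹' A i) :=
    MeasurableSet.biInter t.countable_toSet fun i _ => (measurable_pi_apply i) (hA i)
  rw [Measure.map_apply (measurable_shiftE x) hbox]
  have hpre : shiftE x ⁻¹' (⋂ i ∈ t, (fun ω : Env => ω i) ⁻¹' A i)
      = ⋂ i ∈ t, (fun ω : Env => ω (i + x)) ⁻¹' A i := by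
    ext ω
    simp [shiftE]
  rw [hpre]
  have h1 : (⋂ j ∈ t.image (fun i => i + x), (fun ω : Env => ω j) ⁻¹' A (j - x))
      = ⋂ i ∈ t, (fun ω : Env => ω (i + x)) ⁻¹' A i := by
    ext ω
    simp only [Set.mem_iInter, Finset.mem_image, Set.mem_preimage]
    constructor
    · intro h i hi
      have := h (i + x) ⟨i, hi, rfl⟩
      simpa using this
    · rintro h j ⟨i, hi, rfl⟩
      simpa using h i hi
  have prodL := hEnv.indep.measure_inter_preimage_eq_mul (t.image (fun i => i + x))
    (sets := fun j => A (j - x)) (fun j _ => hA _)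
  rw [h1] at prodL
  have prodR := hEnv.indep.measure_inter_preimage_eq_mul t (sets := A) (fun i _ => hA i)
  rw [prodL, prodR]
  rw [Finset.prod_image (by intro a _ b _ h; simpa using h)]
  refine Finset.prod_congr rfl fun i _ => ?_
  have hid : IdentDistrib (fun ω : Env => ω (i + x)) (fun ω : Env => ω i) P P :=
    (hEnv.ident (i + x)).trans (hEnv.ident i).symm
  have hmap := hid.map_eq
  have hm1 : Measurable fun ω : Env => ω (i + x) := measurable_pi_apply (i + x)
  have hm2 : Measurable fun ω : Env => ω i := measurable_pi_apply i
  have e1 : P ((fun ω : Env => ω (i + x)) ⁻¹' A (i + x - x))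
      = (P.map (fun ω : Env => ω (i + x))) (A (i + x - x)) :=
    (Measure.map_apply hm1 (hA _)).symm
  have e2 : (P.map (fun ω : Env => ω i)) (A (i + x - x))
      = P ((fun ω : Env => ω i) ⁻¹' A (i + x - x)) :=
    Measure.map_apply hm2 (hA _)
  rw [e1, hmap, e2]
  have : i + x - x = i := by omega
  rw [this]

lemma ae_shift {P : Measure Env} {s : ℝ} (hEnv : EnvHyp P s) (x : ℤ) {Q : Env → Prop}
    (h : ∀ᵐ ω ∂P, Q ω) : ∀ᵐ ω ∂P, Q (shiftE x ω) := by
  refine MeasureTheory.ae_of_ae_map (measurable_shiftE x).aemeasurable ?_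
  rwa [map_shiftE hEnv x]

lemma lintegral_shift {P : Measure Env} {s : ℝ} (hEnv : EnvHyp P s) (x : ℤ) {f : Env → ℝ≥0∞}
    (hf : Measurable f) : ∫⁻ ω, f (shiftE x ω) ∂P = ∫⁻ ω, f ω ∂P := by
  conv_rhs => rw [← map_shiftE hEnv x]
  rw [lintegral_map hf (measurable_shiftE x)]

/-! #### Products of alphas -/

lemma sprod_nonneg {ω : Env} (hα : ∀ i, 0 < alpha ω i) (a : ℤ) (k : ℕ) : 0 ≤ sprod ω a k :=
  Finset.prod_nonneg fun _ _ => (hα _).le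

lemma sprod_pos {ω : Env} (hα : ∀ i, 0 < alpha ω i) (a : ℤ) (k : ℕ) : 0 < sprod ω a k :=
  Finset.prod_pos fun _ _ => hα _

lemma sprod_add (ω : Env) (a : ℤ) (k l : ℕ) :
    sprod ω a (k + l) = sprod ω a k * sprod ω (a + k) l := by
  unfold sprod
  rw [Finset.prod_range_add]
  congr 1
  refine Finset.prod_congr rfl fun i _ => ?_
  congr 1
  push_cast
  ring

lemma sprod_shiftE (x : ℤ) (ω : Env) (a : ℤ) (k : ℕ) :
    sprod (shiftE x ω) a k = sprod ω (a + x) k := by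
  unfold sprod
  refine Finset.prod_congr rfl fun i _ => ?_
  rw [alpha_shiftE]
  congr 1
  ring

/-! #### Strong law of large numbers for the environment -/

lemma slln_core {P : Measure Env} {s : ℝ} (hEnv : EnvHyp P s) (g : ℕ → ℤ)
    (hg : Function.Injective g) :
    ∀ᵐ ω ∂P, Tendsto (fun n : ℕ => (n:ℝ)⁻¹ * ∑ j ∈ Finset.range n, Real.log (alpha ω (g j)))
      atTop (𝓝 (∫ ω, Real.log (alpha ω 0) ∂P)) := by
  haveI := hEnv.prob
  obtain ⟨ε₀, hε₀, hell⟩ := hEnv.elliptic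
  set f : ℝ → ℝ := fun r => Real.log ((1 - r) / r) with hf
  have hfm : Measurable f :=
    Real.measurable_log.comp ((measurable_const.sub measurable_id).div measurable_id)
  set X : ℕ → Env → ℝ := fun j ω => f (ω (g j)) with hX
  have hident : ∀ j, IdentDistrib (X j) (X 0) P P := fun j =>
    ((hEnv.ident (g j)).trans (hEnv.ident (g 0)).symm).comp hfm
  have hindep : Pairwise (Function.onFun (IndepFun · · P) X) := by
    intro i j hij
    exact (hEnv.indep.indepFun (hg.ne hij)).comp hfm hfm
  have hC : ∃ C : ℝ, ∀ᵐ ω ∂P, ∀ i : ℤ, ‖f (ω i)‖ ≤ C := by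
    refine ⟨|Real.log (ε₀ / (1 - ε₀))| + |Real.log ((1 - ε₀) / ε₀)|, ?_⟩
    filter_upwards [hell] with ω hω i
    obtain ⟨h1, h2⟩ := hω i
    have hp : 0 < ω i := lt_of_lt_of_le hε₀ h1
    have hq : 0 < 1 - ω i := by
      have := hω i
      nlinarith [hω i, hε₀]
    have hε₁ : ε₀ < 1 := by nlinarith
    have hlo : ε₀ / (1 - ε₀) ≤ (1 - ω i) / ω i := by
      rw [div_le_div_iff₀ (by linarith) hp]
      nlinarith
    have hhi : (1 - ω i) / ω i ≤ (1 - ε₀) / ε₀ := by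
      rw [div_le_div_iff₀ hp hε₀]
      nlinarith
    have hmono1 : Real.log (ε₀ / (1 - ε₀)) ≤ Real.log ((1 - ω i) / ω i) :=
      Real.log_le_log (div_pos hε₀ (by linarith)) hlo
    have hmono2 : Real.log ((1 - ω i) / ω i) ≤ Real.log ((1 - ε₀) / ε₀) :=
      Real.log_le_log (div_pos hq hp) hhi
    rw [Real.norm_eq_abs]
    rw [abs_le]
    constructor
    · have := neg_abs_le (Real.log (ε₀ / (1 - ε₀)))
      have h3 := abs_nonneg (Real.log ((1 - ε₀) / ε₀))
      simp only [hf]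
      linarith
    · have := le_abs_self (Real.log ((1 - ε₀) / ε₀))
      have h3 := abs_nonneg (Real.log (ε₀ / (1 - ε₀)))
      simp only [hf]
      linarith
  obtain ⟨C, hCae⟩ := hC
  have hint : Integrable (X 0) P := by
    refine Integrable.mono' (integrable_const C)
      ((hfm.comp (measurable_pi_apply (g 0))).aestronglyMeasurable) ?_
    filter_upwards [hCae] with ω hω
    exact hω (g 0)
  have hmean : (∫ ω, X 0 ω ∂P) = ∫ ω, Real.log (alpha ω 0) ∂P := by
    have h := ((hEnv.ident (g 0)).comp hfm).integral_eq
    simp only [Function.comp] at h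
    exact h
  have := ProbabilityTheory.strong_law_ae X hint hindep hident
  filter_upwards [this] with ω hω
  rw [← hmean]
  have : (fun n : ℕ => (n:ℝ)⁻¹ * ∑ j ∈ Finset.range n, Real.log (alpha ω (g j)))
      = fun n : ℕ => (n:ℝ)⁻¹ • ∑ j ∈ Finset.range n, X j ω := by
    funext n
    rw [smul_eq_mul]
    rfl
  rw [this]
  exact hω

lemma log_mean_neg {P : Measure Env} {s : ℝ} (hEnv : EnvHyp P s) :
    ∫ ω, Real.log (alpha ω 0) ∂P < 0 := by
  obtain ⟨ε₀, hε₀, hell⟩ := hEnv.elliptic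
  have hcong : ∫ ω, Real.log (alpha ω 0) ∂P = ∫ ω, - Real.log (ω 0 / (1 - ω 0)) ∂P := by
    refine integral_congr_ae ?_
    filter_upwards [hell] with ω hω
    obtain ⟨h1, h2⟩ := hω 0
    have hp : 0 < ω 0 := lt_of_lt_of_le hε₀ h1
    have hq : 0 < 1 - ω 0 := by nlinarith
    rw [alpha, Real.log_div (by linarith) (by linarith), Real.log_div (by linarith) (by linarith)]
    ring
  rw [hcong, integral_neg]
  linarith [hEnv.drift]

lemma tail_tendsto {f : ℕ → ℝ} (hf : Summable f) :
    Tendsto (fun N => ∑' k, f (N + k)) atTop (𝓝 0) := by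
  have heq : ∀ N, ∑' k, f (N + k) = (∑' k, f k) - ∑ i ∈ Finset.range N, f i := by
    intro N
    have h := Summable.sum_add_tsum_nat_add N hf
    have h2 : ∑' (i : ℕ), f (i + N) = ∑' (k : ℕ), f (N + k) :=
      tsum_congr fun k => by rw [add_comm]
    rw [h2] at h
    linarith
  have : Tendsto (fun N => (∑' k, f k) - ∑ i ∈ Finset.range N, f i) atTop
      (𝓝 ((∑' k, f k) - ∑' k, f k)) :=
    Tendsto.const_sub _ hf.hasSum.tendsto_sum_nat
  rw [sub_self] at this
  exact Tendsto.congr (fun N => (heq N).symm) this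


/-! #### Almost every environment is good -/

lemma goodEnv_ae {P : Measure Env} {s : ℝ} {Pq : Env → Measure Traj}
    (hEnv : EnvHyp P s) (hWalk : WalkHyp P Pq) : ∀ᵐ ω ∂P, GoodEnv Pq ω := by
  haveI := hEnv.prob
  obtain ⟨ε₀, hε₀, hell⟩ := hEnv.elliptic
  set L := ∫ ω, Real.log (alpha ω 0) ∂P with hLdef
  have hL : L < 0 := log_mean_neg hEnv
  have hlaws : ∀ᵐ ω ∂P, ∀ x : ℤ, IsQuenchedLaw (shiftE x ω) (Pq (shiftE x ω)) :=
    ae_all_iff.mpr fun x => ae_shift hEnv x hWalk.quenched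
  have hslln1 := slln_core hEnv (fun j => 1 + (j:ℤ)) (fun a b h => by simpa using h)
  have hslln2 := slln_core hEnv (fun j => -(j:ℤ)) (fun a b h => by simpa using h)
  filter_upwards [hell, hlaws, hslln1, hslln2] with ω hωell hωlaw h1 h2
  have hpos : ∀ i, 0 < ω i := fun i => lt_of_lt_of_le hε₀ (hωell i).1
  have hlt1 : ∀ i, ω i < 1 := fun i => by nlinarith [(hωell i).2, hε₀]
  have hα : ∀ i, 0 < alpha ω i := fun i => div_pos (by linarith [hlt1 i]) (hpos i)
  have hev1 : ∀ᶠ n : ℕ in atTop,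
      (n:ℝ)⁻¹ * ∑ j ∈ Finset.range n, Real.log (alpha ω (1 + (j:ℤ))) < L/2 :=
    h1.eventually_lt_const (by linarith)
  obtain ⟨N₁, hN₁⟩ := eventually_atTop.mp hev1
  have hSle : ∀ n, max N₁ 1 ≤ n →
      ∑ j ∈ Finset.range n, Real.log (alpha ω (1 + (j:ℤ))) ≤ (L/2) * n := by
    intro n hn
    have hn1 : 1 ≤ n := le_trans (le_max_right _ _) hn
    have hb := hN₁ n (le_trans (le_max_left _ _) hn)
    have hnpos : (0:ℝ) < n := by exact_mod_cast hn1
    have hmul := (mul_lt_mul_iff_right₀ hnpos).mpr hb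
    rw [← mul_assoc, mul_inv_cancel₀ (ne_of_gt hnpos), one_mul] at hmul
    nlinarith
  have hexp1 : ∀ n : ℕ, sprod ω 0 n
      = Real.exp (∑ j ∈ Finset.range n, Real.log (alpha ω (1 + (j:ℤ)))) := by
    intro n
    rw [Real.exp_sum]
    unfold sprod
    refine Finset.prod_congr rfl fun j _ => ?_
    rw [Real.exp_log (hα _), zero_add]
  have hsumm : Summable (fun k => sprod ω 0 k) := by
    set r := Real.exp (L/2) with hr
    have hr1 : r < 1 := by
      rw [hr]
      have : Real.exp (L/2) < Real.exp 0 := Real.exp_lt_exp.mpr (by linarith)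
      simpa using this
    have hgeo : Summable (fun n : ℕ => r ^ n) :=
      summable_geometric_of_lt_one (Real.exp_pos _).le hr1
    set M := max N₁ 1 with hM
    refine (summable_nat_add_iff M).mp ?_
    refine Summable.of_nonneg_of_le (fun n => sprod_nonneg hα 0 _) (fun n => ?_)
      ((summable_nat_add_iff M).mpr hgeo)
    have hb := hSle (n + M) (Nat.le_add_left M n)
    calc sprod ω 0 (n + M) ≤ Real.exp ((L/2) * ((n + M : ℕ):ℝ)) := by
          rw [hexp1]
          exact Real.exp_le_exp.mpr hb
      _ = r ^ (n + M) := by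
          rw [hr, ← Real.exp_nat_mul]
          ring_nf
  have hleft : Tendsto (fun m : ℕ => sprod ω (-(m:ℤ)) m) atTop (𝓝 0) := by
    have hexp2 : ∀ m : ℕ, sprod ω (-(m:ℤ)) m
        = Real.exp (∑ j ∈ Finset.range m, Real.log (alpha ω (-(j:ℤ)))) := by
      intro m
      rw [Real.exp_sum]
      have h2' : ∀ j ∈ Finset.range m,
          Real.exp (Real.log (alpha ω (-(j:ℤ)))) = alpha ω (-(j:ℤ)) :=
        fun j _ => Real.exp_log (hα _)
      rw [Finset.prod_congr rfl h2']
      unfold sprod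
      rw [← Finset.prod_range_reflect (fun j => alpha ω (-(j:ℤ))) m]
      refine Finset.prod_congr rfl fun i hi => ?_
      simp only [Finset.mem_range] at hi
      congr 1
      omega
    have hev2 : ∀ᶠ m : ℕ in atTop,
        (m:ℝ)⁻¹ * ∑ j ∈ Finset.range m, Real.log (alpha ω (-(j:ℤ))) < L/2 :=
      h2.eventually_lt_const (by linarith)
    obtain ⟨N₂, hN₂⟩ := eventually_atTop.mp hev2
    have hbound : ∀ᶠ m : ℕ in atTop,
        (∑ j ∈ Finset.range m, Real.log (alpha ω (-(j:ℤ)))) ≤ (L/2) * m := by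
      rw [eventually_atTop]
      refine ⟨max N₂ 1, fun m hm => ?_⟩
      have hm1 : 1 ≤ m := le_trans (le_max_right _ _) hm
      have hb := hN₂ m (le_trans (le_max_left _ _) hm)
      have hmpos : (0:ℝ) < m := by exact_mod_cast hm1
      have hmul := (mul_lt_mul_iff_right₀ hmpos).mpr hb
      rw [← mul_assoc, mul_inv_cancel₀ (ne_of_gt hmpos), one_mul] at hmul
      nlinarith
    have hlin : Tendsto (fun m : ℕ => (L/2) * (m:ℝ)) atTop atBot := by
      have hpos2 : (0:ℝ) < -(L/2) := by linarith
      have hmul := Tendsto.const_mul_atTop hpos2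
        (tendsto_natCast_atTop_atTop (R := ℝ))
      have hneg := tendsto_neg_atTop_atBot.comp hmul
      refine hneg.congr fun m => ?_
      show -(-(L/2) * (m:ℝ)) = L/2 * m
      ring
    have hS : Tendsto (fun m : ℕ => ∑ j ∈ Finset.range m, Real.log (alpha ω (-(j:ℤ))))
        atTop atBot := tendsto_atBot_mono' atTop hbound hlin
    have hcomp := Real.tendsto_exp_atBot.comp hS
    exact hcomp.congr fun m => (hexp2 m).symm
  exact ⟨hpos, hlt1, hωlaw, hsumm, hleft⟩

namespace GoodEnv

variable {Pq : Env → Measure Traj} {ω : Env}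

lemma alphaPos (hg : GoodEnv Pq ω) (i : ℤ) : 0 < alpha ω i :=
  div_pos (by linarith [hg.lt1 i]) (hg.pos i)

lemma bounds (hg : GoodEnv Pq ω) : ∀ i, 0 ≤ ω i ∧ ω i ≤ 1 :=
  fun i => ⟨(hg.pos i).le, (hg.lt1 i).le⟩

lemma law0 (hg : GoodEnv Pq ω) : IsQuenchedLaw ω (Pq ω) := by
  have := hg.law 0
  rwa [shiftE_zero] at this

lemma summ (hg : GoodEnv Pq ω) (x : ℤ) : Summable (fun k => sprod ω x k) := by
  have hα := hg.alphaPos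
  rcases le_or_gt 0 x with hx | hx
  · set t := x.toNat with ht
    have htx : (t:ℤ) = x := Int.toNat_of_nonneg hx
    have hshift : Summable (fun k => sprod ω 0 (t + k)) :=
      Summable.congr ((summable_nat_add_iff t).mpr hg.summ0) fun k => by rw [add_comm]
    have key : ∀ k, sprod ω x k = (sprod ω 0 t)⁻¹ * sprod ω 0 (t + k) := by
      intro k
      rw [sprod_add, zero_add, htx, inv_mul_cancel_left₀ (ne_of_gt (sprod_pos hα 0 t))]
    exact Summable.congr (hshift.mul_left _) fun k => (key k).symm
  · set t := (-x).toNat with ht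
    have htx : (t:ℤ) = -x := Int.toNat_of_nonneg (by omega)
    have key : ∀ k, sprod ω x (t + k) = sprod ω x t * sprod ω 0 k := by
      intro k
      rw [sprod_add]
      rw [show (x + (t:ℤ)) = 0 by omega]
    refine (summable_nat_add_iff t).mp ?_
    refine Summable.congr (hg.summ0.mul_left (sprod ω x t)) fun k => ?_
    rw [add_comm k t, key k]

lemma left (hg : GoodEnv Pq ω) (x : ℤ) :
    Tendsto (fun m : ℕ => sprod ω (x - (m:ℤ)) m) atTop (𝓝 0) := by
  have hα := hg.alphaPos
  rcases le_or_gt 0 x with hx | hx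
  · set t := x.toNat with ht
    have htx : (t:ℤ) = x := Int.toNat_of_nonneg hx
    rw [← tendsto_add_atTop_iff_nat t]
    have key : ∀ m : ℕ, sprod ω (x - ((m + t : ℕ):ℤ)) (m + t)
        = sprod ω (-(m:ℤ)) m * sprod ω 0 t := by
      intro m
      have e1 : x - ((m + t:ℕ):ℤ) = -(m:ℤ) := by push_cast; omega
      rw [e1, sprod_add]
      rw [show (-(m:ℤ) + ((m:ℕ):ℤ)) = 0 by push_cast; ring]
    have hmul := hg.left0.mul_const (sprod ω 0 t)
    rw [zero_mul] at hmul
    exact Tendsto.congr (fun m => (key m).symm) hmul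
  · set t := (-x).toNat with ht
    have htx : (t:ℤ) = -x := Int.toNat_of_nonneg (by omega)
    have hc : 0 < sprod ω x t := sprod_pos hα x t
    have key : ∀ m : ℕ, sprod ω (x - (m:ℤ)) m
        = sprod ω (-((m + t:ℕ):ℤ)) (m + t) / sprod ω x t := by
      intro m
      rw [eq_div_iff (ne_of_gt hc)]
      have e1 : -((m + t:ℕ):ℤ) = x - (m:ℤ) := by push_cast; omega
      rw [e1, sprod_add]
      rw [show (x - (m:ℤ) + ((m:ℕ):ℤ)) = x by push_cast; ring]
    have hcomp : Tendsto (fun m : ℕ => sprod ω (-((m + t:ℕ):ℤ)) (m + t)) atTop (𝓝 0) :=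
      hg.left0.comp (tendsto_add_atTop_nat t)
    have hdiv := hcomp.div_const (sprod ω x t)
    rw [zero_div] at hdiv
    exact Tendsto.congr (fun m => (key m).symm) hdiv

lemma shift (hg : GoodEnv Pq ω) (x : ℤ) : GoodEnv Pq (shiftE x ω) := by
  refine ⟨fun i => hg.pos _, fun i => hg.lt1 _, fun y => ?_, ?_, ?_⟩
  · rw [shiftE_shiftE]
    exact hg.law (x + y)
  · refine Summable.congr (hg.summ x) fun k => ?_
    rw [sprod_shiftE, zero_add]
  · refine Tendsto.congr (fun m => ?_) (hg.left x)
    rw [sprod_shiftE]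
    congr 1
    ring

end GoodEnv


/-! #### One-step decomposition -/

def zup : ℕ → ℤ := fun j => if j = 0 then 0 else 1
def zdn : ℕ → ℤ := fun j => if j = 0 then 0 else -1

lemma cyl_zup : cyl 1 zup = {X : Traj | X 0 = 0 ∧ X 1 = 1} := by
  ext X
  simp only [cyl, Set.mem_setOf_eq]
  constructor
  · intro h
    have h0 := h 0 (by norm_num)
    have h1 := h 1 le_rfl
    simp [zup] at h0 h1
    exact ⟨h0, h1⟩
  · rintro ⟨h0, h1⟩ j hj
    interval_cases j <;> simpa [zup]
  
lemma cyl_zdn : cyl 1 zdn = {X : Traj | X 0 = 0 ∧ X 1 = -1} := by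
  ext X
  simp only [cyl, Set.mem_setOf_eq]
  constructor
  · intro h
    have h0 := h 0 (by norm_num)
    have h1 := h 1 le_rfl
    simp [zdn] at h0 h1
    exact ⟨h0, h1⟩
  · rintro ⟨h0, h1⟩ j hj
    interval_cases j <;> simpa [zdn]

lemma one_step {ω : Env} {μ νp νm : Measure Traj} (hμ : IsQuenchedLaw ω μ)
    (hb : ∀ i, 0 ≤ ω i ∧ ω i ≤ 1)
    (hνp : IsQuenchedLaw (shiftE 1 ω) νp) (hνm : IsQuenchedLaw (shiftE (-1) ω) νm)
    {E Ep Emm : Set Traj} (hE : MeasurableSet E) (hEp : MeasurableSet Ep)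
    (hEm : MeasurableSet Emm)
    (hp : ∀ X : Traj, X 0 = 0 → (X ∈ E ↔ shiftT 1 1 X ∈ Ep))
    (hm : ∀ X : Traj, X 0 = 0 → (X ∈ E ↔ shiftT 1 (-1) X ∈ Emm)) :
    μ E = ENNReal.ofReal (ω 0) * νp Ep + ENNReal.ofReal (1 - ω 0) * νm Emm := by
  haveI := hμ.prob
  set cp : Set Traj := {X | X 0 = 0 ∧ X 1 = 1} with hcp
  set cm : Set Traj := {X | X 0 = 0 ∧ X 1 = -1} with hcm
  have hcpm : MeasurableSet cp := by
    have : cp = {X : Traj | X 0 ∈ ({0} : Set ℤ)} ∩ {X : Traj | X 1 ∈ ({1} : Set ℤ)} := by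
      ext X; simp [hcp]
    rw [this]
    exact (measurableSet_eval 0 _).inter (measurableSet_eval 1 _)
  have hcmm : MeasurableSet cm := by
    have : cm = {X : Traj | X 0 ∈ ({0} : Set ℤ)} ∩ {X : Traj | X 1 ∈ ({-1} : Set ℤ)} := by
      ext X; simp [hcm]
    rw [this]
    exact (measurableSet_eval 0 _).inter (measurableSet_eval 1 _)
  have hsplit := (measure_inter_add_diff (μ := μ) E (hcpm.union hcmm)).symm
  have hnull : μ (E \ (cp ∪ cm)) = 0 := by
    have hzero : μ (startSetᶜ ∪ nearestSetᶜ) = 0 :=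
      measure_union_null (start_compl_null hμ) (nearest_compl_null hμ)
    refine le_antisymm (le_trans (measure_mono ?_) (le_of_eq hzero)) zero_le
    rintro X ⟨_, hX⟩
    by_cases h0 : X 0 = 0
    · right
      intro hnear
      apply hX
      rcases hnear 0 with h | h <;> norm_num at h
      · left; exact ⟨h0, by omega⟩
      · right; exact ⟨h0, by omega⟩
    · left; exact h0
  have hdistrib : μ (E ∩ (cp ∪ cm)) = μ (E ∩ cp) + μ (E ∩ cm) := by
    rw [Set.inter_union_distrib_left]
    refine measure_union ?_ (hE.inter hcmm)
    apply Set.disjoint_left.mpr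
    rintro X ⟨_, _, h1⟩ ⟨_, _, h2⟩
    omega
  have hEtot : μ E = μ (E ∩ cp) + μ (E ∩ cm) := by
    rw [hsplit, hnull, add_zero, hdistrib]
  have hup : μ (E ∩ cp) = ENNReal.ofReal (ω 0) * νp Ep := by
    have hset : E ∩ cp = cyl 1 zup ∩ (shiftT 1 (zup 1)) ⁻¹' Ep := by
      rw [cyl_zup]
      ext X
      simp only [Set.mem_inter_iff, Set.mem_setOf_eq, Set.mem_preimage, hcp]
      constructor
      · rintro ⟨hXE, h0, h1⟩
        refine ⟨⟨h0, h1⟩, ?_⟩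
        have := (hp X h0).mp hXE
        simpa [zup] using this
      · rintro ⟨⟨h0, h1⟩, hXp⟩
        refine ⟨?_, h0, h1⟩
        apply (hp X h0).mpr
        simpa [zup] using hXp
    rw [hset, markov hμ hb 1 zup (by simpa [zup] using hνp) Ep hEp]
    congr 1
    rw [meas_cyl hμ hb 1 zup]
    congr 1
    simp [wgt, stepw, zup]
  have hdn : μ (E ∩ cm) = ENNReal.ofReal (1 - ω 0) * νm Emm := by
    have hset : E ∩ cm = cyl 1 zdn ∩ (shiftT 1 (zdn 1)) ⁻¹' Emm := by
      rw [cyl_zdn]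
      ext X
      simp only [Set.mem_inter_iff, Set.mem_setOf_eq, Set.mem_preimage, hcm]
      constructor
      · rintro ⟨hXE, h0, h1⟩
        refine ⟨⟨h0, h1⟩, ?_⟩
        have := (hm X h0).mp hXE
        simpa [zdn] using this
      · rintro ⟨⟨h0, h1⟩, hXp⟩
        refine ⟨?_, h0, h1⟩
        apply (hm X h0).mpr
        simpa [zdn] using hXp
    rw [hset, markov hμ hb 1 zdn (by simpa [zdn] using hνm) Emm hEm]
    congr 1
    rw [meas_cyl hμ hb 1 zdn]
    congr 1
    simp [wgt, stepw, zdn]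
  rw [hEtot, hup, hdn]

/-! #### Solving the harmonic recursion -/

lemma solve_rec (p : ℕ → ℝ) (hp : ∀ j, 0 < p j) (β : ℕ → ℝ)
    (hβ : ∀ j, β j = (1 - p (j+1)) / p (j+1)) (F : ℕ → ℝ) (L : ℕ)
    (hF : ∀ j : ℕ, 0 < j → j < L → F j = p j * F (j+1) + (1 - p j) * F (j-1)) :
    ∀ j ≤ L, F j = F 0 + (F 1 - F 0) * ∑ m ∈ Finset.range j,
      ∏ i ∈ Finset.range m, β i := by
  have hd : ∀ j : ℕ, j + 1 ≤ L →
      F (j+1) - F j = (F 1 - F 0) * ∏ i ∈ Finset.range j, β i := by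
    intro j
    induction j with
    | zero => intro _; simp
    | succ j ih =>
      intro hj
      have ihj := ih (by omega)
      have hrec := hF (j+1) (by omega) (by omega)
      simp only [Nat.add_sub_cancel] at hrec
      have hpj := hp (j+1)
      have key : F (j+1+1) - F (j+1) = β j * (F (j+1) - F j) := by
        rw [hβ j]
        rw [div_mul_eq_mul_div, eq_div_iff (ne_of_gt hpj)]
        ring_nf
        ring_nf at hrec
        nlinarith [hrec]
      rw [key, ihj, Finset.prod_range_succ]
      ring
  intro j hj
  induction j with
  | zero => simp
  | succ j ih =>
    have hdd := hd j hj
    have ihj := ih (by omega)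
    rw [Finset.sum_range_succ]
    have expand : (F 1 - F 0) * ((∑ m ∈ Finset.range j, ∏ i ∈ Finset.range m, β i)
        + ∏ i ∈ Finset.range j, β i)
        = (F 1 - F 0) * (∑ m ∈ Finset.range j, ∏ i ∈ Finset.range m, β i)
        + (F 1 - F 0) * ∏ i ∈ Finset.range j, β i := by ring
    rw [expand]
    linarith

/-! #### Translation consistency of hitting events -/

lemma hitBefore_shiftT (c d e : ℤ) (hc : c ≠ 0) (hd : d ≠ 0) (X : Traj) (h0 : X 0 = 0) :
    X ∈ hitBefore c d ↔ shiftT 1 e X ∈ hitBefore (c - e) (d - e) := by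
  simp only [hitBefore, Set.mem_setOf_eq, shiftT]
  constructor
  · rintro ⟨t, htc, hall⟩
    have ht : t ≠ 0 := by
      rintro rfl
      omega
    obtain ⟨t', rfl⟩ : ∃ t', t = t' + 1 := ⟨t - 1, by omega⟩
    refine ⟨t', by omega, fun u hu => ?_⟩
    have := hall (u + 1) (by omega)
    omega
  · rintro ⟨t, htc, hall⟩
    refine ⟨t + 1, by omega, fun u hu => ?_⟩
    rcases Nat.eq_zero_or_pos u with rfl | hu0
    · omega
    · obtain ⟨u', rfl⟩ : ∃ u', u = u' + 1 := ⟨u - 1, by omega⟩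
      have := hall u' (by omega)
      omega

lemma noExitE_shiftT (c d e : ℤ) (hc : c ≠ 0) (hd : d ≠ 0) (X : Traj) (h0 : X 0 = 0) :
    X ∈ noExitE c d ↔ shiftT 1 e X ∈ noExitE (c - e) (d - e) := by
  simp only [noExitE, Set.mem_setOf_eq, shiftT]
  constructor
  · intro h t
    have := h (t + 1)
    omega
  · intro h t
    rcases Nat.eq_zero_or_pos t with rfl | ht
    · omega
    · obtain ⟨t', rfl⟩ : ∃ t', t = t' + 1 := ⟨t - 1, by omega⟩
      have := h t'
      omega


/-! #### Interval analysis for the quenched walk -/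

section Interval

variable {Pq : Env → Measure Traj} {ω : Env}

lemma toReal_arg_congr (G : ℤ → ℤ → Set Traj)
    {x x' c c' d d' : ℤ} (hx : x = x') (hc : c = c') (hd : d = d') :
    ((Pq (shiftE x ω)) (G c d)).toReal = ((Pq (shiftE x' ω)) (G c' d')).toReal := by
  subst hx; subst hc; subst hd; rfl

lemma family_rec (hg : GoodEnv Pq ω) (G : ℤ → ℤ → Set Traj)
    (hGmeas : ∀ c d, MeasurableSet (G c d))
    (hGshift : ∀ (c d e : ℤ) (X : Traj), c ≠ 0 → d ≠ 0 → X 0 = 0 →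
      (X ∈ G c d ↔ shiftT 1 e X ∈ G (c - e) (d - e)))
    (a b x : ℤ) (hax : a < x) (hxb : x < b) :
    ((Pq (shiftE x ω)) (G (b - x) (a - x))).toReal
      = ω x * ((Pq (shiftE (x+1) ω)) (G (b - x - 1) (a - x - 1))).toReal
      + (1 - ω x) * ((Pq (shiftE (x-1) ω)) (G (b - x + 1) (a - x + 1))).toReal := by
  have hg' : GoodEnv Pq (shiftE x ω) := hg.shift x
  have h1 : shiftE 1 (shiftE x ω) = shiftE (x+1) ω := by rw [shiftE_shiftE]
  have h2 : shiftE (-1) (shiftE x ω) = shiftE (x-1) ω := by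
    have h := shiftE_shiftE x (-1) ω
    rwa [show x + (-1:ℤ) = x - 1 by ring] at h
  haveI := (hg.law (x+1)).prob
  haveI := (hg.law (x-1)).prob
  have hνp : IsQuenchedLaw (shiftE 1 (shiftE x ω)) (Pq (shiftE (x+1) ω)) := by
    rw [h1]; exact hg.law (x+1)
  have hνm : IsQuenchedLaw (shiftE (-1) (shiftE x ω)) (Pq (shiftE (x-1) ω)) := by
    rw [h2]; exact hg.law (x-1)
  have hos := one_step hg'.law0 hg'.bounds hνp hνm (hGmeas (b-x) (a-x))
    (hGmeas (b-x-1) (a-x-1)) (hGmeas (b-x+1) (a-x+1))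
    (fun X h0 => hGshift (b-x) (a-x) 1 X (by omega) (by omega) h0)
    (fun X h0 => by
      have := hGshift (b-x) (a-x) (-1) X (by omega) (by omega) h0
      simpa using this)
  rw [hos, ENNReal.toReal_add
      (ENNReal.mul_ne_top ENNReal.ofReal_ne_top (measure_ne_top _ _))
      (ENNReal.mul_ne_top ENNReal.ofReal_ne_top (measure_ne_top _ _)),
    ENNReal.toReal_mul, ENNReal.toReal_mul]
  simp only [shiftE_apply, zero_add]
  have t1 : (ENNReal.ofReal (ω x)).toReal = ω x := ENNReal.toReal_ofReal (hg.pos x).le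
  have t2 : (ENNReal.ofReal (1 - ω x)).toReal = 1 - ω x :=
    ENNReal.toReal_ofReal (by linarith [hg.lt1 x])
  simp only [t1, t2]

lemma family_formula (hg : GoodEnv Pq ω) (G : ℤ → ℤ → Set Traj)
    (hGmeas : ∀ c d, MeasurableSet (G c d))
    (hGshift : ∀ (c d e : ℤ) (X : Traj), c ≠ 0 → d ≠ 0 → X 0 = 0 →
      (X ∈ G c d ↔ shiftT 1 e X ∈ G (c - e) (d - e)))
    (a b : ℤ) (ha : a < 0) (hb : 0 < b) :
    ∀ j ≤ (b - a).toNat,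
      ((Pq (shiftE (a + (j:ℤ)) ω)) (G (b - (a+(j:ℤ))) (a - (a+(j:ℤ))))).toReal
        = ((Pq (shiftE a ω)) (G (b-a) 0)).toReal
          + (((Pq (shiftE (a+1) ω)) (G (b-a-1) (-1))).toReal
             - ((Pq (shiftE a ω)) (G (b-a) 0)).toReal) * Ssum ω a j := by
  have hLcast : ((b - a).toNat : ℤ) = b - a := Int.toNat_of_nonneg (by omega)
  set F : ℕ → ℝ :=
    fun j => ((Pq (shiftE (a + (j:ℤ)) ω)) (G (b - (a+(j:ℤ))) (a - (a+(j:ℤ))))).toReal with hFdef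
  have hrec : ∀ j : ℕ, 0 < j → j < (b - a).toNat →
      F j = ω (a + (j:ℤ)) * F (j+1) + (1 - ω (a + (j:ℤ))) * F (j-1) := by
    intro j hj hjL
    have hax : a < a + (j:ℤ) := by omega
    have hxb : a + (j:ℤ) < b := by omega
    have hfr := family_rec hg G hGmeas hGshift a b (a + (j:ℤ)) hax hxb
    have e1 : F (j+1) = ((Pq (shiftE (a + (j:ℤ) + 1) ω))
        (G (b - (a+(j:ℤ)) - 1) (a - (a+(j:ℤ)) - 1))).toReal :=
      toReal_arg_congr G (by push_cast; ring) (by push_cast; ring) (by push_cast; ring)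
    have e2 : F (j-1) = ((Pq (shiftE (a + (j:ℤ) - 1) ω))
        (G (b - (a+(j:ℤ)) + 1) (a - (a+(j:ℤ)) + 1))).toReal :=
      toReal_arg_congr G (by omega) (by omega) (by omega)
    rw [e1, e2]
    exact hfr
  have hsolve := solve_rec (fun j => ω (a + (j:ℤ))) (fun j => hg.pos _)
    (fun i => alpha ω (a + 1 + (i:ℤ)))
    (fun j => by
      show alpha ω (a + 1 + (j:ℤ)) = (1 - ω (a + ((j+1:ℕ):ℤ))) / ω (a + ((j+1:ℕ):ℤ))
      rw [show a + 1 + (j:ℤ) = a + ((j+1:ℕ):ℤ) by push_cast; ring]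
      rfl)
    F (b - a).toNat hrec
  intro j hj
  have h := hsolve j hj
  have hF0 : F 0 = ((Pq (shiftE a ω)) (G (b-a) 0)).toReal :=
    toReal_arg_congr G (by omega) (by omega) (by omega)
  have hF1 : F 1 = ((Pq (shiftE (a+1) ω)) (G (b-a-1) (-1))).toReal :=
    toReal_arg_congr G (by omega) (by omega) (by omega)
  rw [hF0, hF1] at h
  exact h

end Interval


section Transience

variable {Pq : Env → Measure Traj} {ω : Env}

lemma Sinf_nonneg (hα : ∀ i, 0 < alpha ω i) : 0 ≤ Sinf ω :=
  tsum_nonneg fun k => sprod_nonneg hα 0 k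

lemma Ssum_pos (hα : ∀ i, 0 < alpha ω i) (a : ℤ) {L : ℕ} (hL : 0 < L) :
    0 < Ssum ω a L :=
  Finset.sum_pos (fun i _ => sprod_pos hα a i) (by simp [Finset.nonempty_range_iff]; omega)

lemma Ssum_one_le (hα : ∀ i, 0 < alpha ω i) (a : ℤ) {L : ℕ} (hL : 0 < L) :
    1 ≤ Ssum ω a L := by
  have h := Finset.single_le_sum (f := fun m => sprod ω a m)
    (fun i _ => sprod_nonneg hα a i) (Finset.mem_range.mpr hL)
  simpa [sprod, Ssum] using h

/-- Never exiting an interval has probability zero. -/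
lemma noExit_null (hg : GoodEnv Pq ω) (a b : ℤ) (ha : a < 0) (hb : 0 < b) :
    Pq ω (noExitE b a) = 0 := by
  haveI := hg.law0.prob
  have hLcast : (((b - a).toNat):ℤ) = b - a := Int.toNat_of_nonneg (by omega)
  set L := (b - a).toNat with hLdef
  have hform := family_formula hg noExitE (fun c d => measurableSet_noExitE c d)
    (fun c d e X hc hd h0 => noExitE_shiftT c d e hc hd X h0) a b ha hb
  have hFa : ((Pq (shiftE a ω)) (noExitE (b-a) 0)).toReal = 0 := by
    have hsub : noExitE (b-a) 0 ⊆ {X : Traj | X 0 = 0}ᶜ := fun X hX h0 => (hX 0).2 h0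
    have h0 : (Pq (shiftE a ω)) (noExitE (b-a) 0) = 0 :=
      le_antisymm ((measure_mono hsub).trans
        (le_of_eq (start_compl_null (hg.shift a).law0))) zero_le
    rw [h0, ENNReal.toReal_zero]
  have hFb : ((Pq (shiftE (a + (L:ℤ)) ω)) (noExitE (b - (a+(L:ℤ))) (a - (a+(L:ℤ))))).toReal
      = 0 := by
    rw [toReal_arg_congr noExitE (show a + (L:ℤ) = b by omega)
      (show b - (a+(L:ℤ)) = 0 by omega) (show a - (a+(L:ℤ)) = a - b by omega)]
    have hsub : noExitE 0 (a-b) ⊆ {X : Traj | X 0 = 0}ᶜ := fun X hX h0 => (hX 0).1 h0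
    have h0 : (Pq (shiftE b ω)) (noExitE 0 (a-b)) = 0 :=
      le_antisymm ((measure_mono hsub).trans
        (le_of_eq (start_compl_null (hg.shift b).law0))) zero_le
    rw [h0, ENNReal.toReal_zero]
  have hSLpos : 0 < Ssum ω a L := Ssum_pos hg.alphaPos a (by omega)
  have hFL := hform L le_rfl
  rw [hFa, hFb] at hFL
  have hF1 : ((Pq (shiftE (a+1) ω)) (noExitE (b-a-1) (-1))).toReal = 0 := by
    have h2 : ((Pq (shiftE (a+1) ω)) (noExitE (b-a-1) (-1))).toReal * Ssum ω a L = 0 := by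
      linarith
    rcases mul_eq_zero.mp h2 with h | h
    · exact h
    · exact absurd h (ne_of_gt hSLpos)
  set j0 := (-a).toNat with hj0def
  have hj0cast : ((j0:ℕ):ℤ) = -a := Int.toNat_of_nonneg (by omega)
  have hj0L : j0 ≤ L := by omega
  have hFj0 := hform j0 hj0L
  rw [hFa, hF1] at hFj0
  simp only [zero_sub, mul_comm, sub_zero, add_zero, zero_add, neg_zero, mul_zero,
    zero_mul, neg_neg] at hFj0
  have hFj0' : ((Pq (shiftE (a + (j0:ℤ)) ω)) (noExitE (b - (a+(j0:ℤ))) (a - (a+(j0:ℤ))))).toReal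
      = ((Pq ω) (noExitE b a)).toReal := by
    rw [toReal_arg_congr noExitE (show a + (j0:ℤ) = 0 by omega)
      (show b - (a+(j0:ℤ)) = b by omega) (show a - (a+(j0:ℤ)) = a by omega)]
    rw [shiftE_zero]
  rw [hFj0'] at hFj0
  have : ((Pq ω) (noExitE b a)).toReal = 0 := by linarith [hFj0]
  exact (ENNReal.toReal_eq_zero_iff _).mp this |>.resolve_right (measure_ne_top _ _)

/-- Gambler's ruin: probability of hitting `b` before `a`, starting from `0`. -/
lemma ruin_value (hg : GoodEnv Pq ω) (a b : ℤ) (ha : a < 0) (hb : 0 < b) :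
    (Pq ω (hitBefore b a)).toReal
      = Ssum ω a (-a).toNat / Ssum ω a ((b - a).toNat) := by
  haveI := hg.law0.prob
  have hLcast : (((b - a).toNat):ℤ) = b - a := Int.toNat_of_nonneg (by omega)
  set L := (b - a).toNat with hLdef
  have hform := family_formula hg hitBefore (fun c d => measurableSet_hitBefore c d)
    (fun c d e X hc hd h0 => hitBefore_shiftT c d e hc hd X h0) a b ha hb
  have hFa : ((Pq (shiftE a ω)) (hitBefore (b-a) 0)).toReal = 0 := by
    have hsub : hitBefore (b-a) 0 ⊆ {X : Traj | X 0 = 0}ᶜ := by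
      rintro X ⟨t, _, hall⟩ h0
      exact hall 0 (Nat.zero_le t) h0
    have h0 : (Pq (shiftE a ω)) (hitBefore (b-a) 0) = 0 :=
      le_antisymm ((measure_mono hsub).trans
        (le_of_eq (start_compl_null (hg.shift a).law0))) zero_le
    rw [h0, ENNReal.toReal_zero]
  have hFb : ((Pq (shiftE (a + (L:ℤ)) ω)) (hitBefore (b - (a+(L:ℤ))) (a - (a+(L:ℤ))))).toReal
      = 1 := by
    rw [toReal_arg_congr hitBefore (show a + (L:ℤ) = b by omega)
      (show b - (a+(L:ℤ)) = 0 by omega) (show a - (a+(L:ℤ)) = a - b by omega)]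
    haveI := (hg.shift b).law0.prob
    have hsup : {X : Traj | X 0 = 0} ⊆ hitBefore 0 (a-b) := by
      intro X h0
      exact ⟨0, h0, fun u hu => by
        have : u = 0 := Nat.le_zero.mp hu
        subst this
        rw [h0]
        omega⟩
    have h1 : (Pq (shiftE b ω)) (hitBefore 0 (a-b)) = 1 := by
      refine le_antisymm prob_le_one ?_
      calc (1:ℝ≥0∞) = (Pq (shiftE b ω)) {X : Traj | X 0 = 0} := ((hg.shift b).law0.start).symm
        _ ≤ _ := measure_mono hsup
    rw [h1, ENNReal.toReal_one]
  have hSLpos : 0 < Ssum ω a L := Ssum_pos hg.alphaPos a (by omega)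
  have hFL := hform L le_rfl
  rw [hFa, hFb] at hFL
  have hF1 : ((Pq (shiftE (a+1) ω)) (hitBefore (b-a-1) (-1))).toReal = 1 / Ssum ω a L := by
    rw [eq_div_iff (ne_of_gt hSLpos)]
    linarith
  set j0 := (-a).toNat with hj0def
  have hj0cast : ((j0:ℕ):ℤ) = -a := Int.toNat_of_nonneg (by omega)
  have hFj0 := hform j0 (by omega)
  rw [hFa, hF1] at hFj0
  have hFj0' : ((Pq (shiftE (a + (j0:ℤ)) ω))
      (hitBefore (b - (a+(j0:ℤ))) (a - (a+(j0:ℤ))))).toReal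
      = ((Pq ω) (hitBefore b a)).toReal := by
    rw [toReal_arg_congr hitBefore (show a + (j0:ℤ) = 0 by omega)
      (show b - (a+(j0:ℤ)) = b by omega) (show a - (a+(j0:ℤ)) = a by omega)]
    rw [shiftE_zero]
  rw [hFj0'] at hFj0
  rw [hFj0]
  field_simp
  ring

/-- The three exit events partition the space of paths from `0`. -/
lemma ruin_partition (hg : GoodEnv Pq ω) (a b : ℤ) (ha : a < 0) (hb : 0 < b) :
    (Pq ω (hitBefore a b)).toReal
      = 1 - Ssum ω a (-a).toNat / Ssum ω a ((b - a).toNat) := by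
  haveI := hg.law0.prob
  set μ := Pq ω with hμdef
  have hdisj1 : Disjoint (hitBefore b a) (hitBefore a b) := by
    apply Set.disjoint_left.mpr
    rintro X ⟨t, htb, hta⟩ ⟨t', hta', htb'⟩
    rcases le_total t t' with h | h
    · exact htb' t h htb
    · exact hta t' h hta'
  have hdisj2 : Disjoint (hitBefore b a ∪ hitBefore a b) (noExitE b a) := by
    apply Set.disjoint_left.mpr
    rintro X (⟨t, htb, _⟩ | ⟨t, hta, _⟩) hno
    · exact (hno t).1 htb
    · exact (hno t).2 hta
  have hcover : {X : Traj | X 0 = 0} ⊆ (hitBefore b a ∪ hitBefore a b) ∪ noExitE b a := by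
    intro X h0
    by_cases hex : ∃ t, X t = a ∨ X t = b
    · left
      obtain ⟨t0, hspec, hmin⟩ : ∃ t0, (X t0 = a ∨ X t0 = b) ∧ ∀ u < t0, ¬(X u = a ∨ X u = b) :=
        ⟨Nat.find hex, Nat.find_spec hex, fun u hu => Nat.find_min hex hu⟩
      rcases hspec with hA | hB
      · right
        refine ⟨t0, hA, fun u hu hub => ?_⟩
        rcases Nat.lt_or_ge u t0 with h | h
        · exact hmin u h (Or.inr hub)
        · have he : u = t0 := by omega
          rw [he] at hub
          omega
      · left
        refine ⟨t0, hB, fun u hu hua => ?_⟩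
        rcases Nat.lt_or_ge u t0 with h | h
        · exact hmin u h (Or.inl hua)
        · have he : u = t0 := by omega
          rw [he] at hua
          omega
    · right
      push_neg at hex
      intro t
      exact ⟨fun h => (hex t).2 h, fun h => (hex t).1 h⟩
  have hmeas1 : MeasurableSet (hitBefore b a) := measurableSet_hitBefore b a
  have hmeas2 : MeasurableSet (hitBefore a b) := measurableSet_hitBefore a b
  have hmeas3 : MeasurableSet (noExitE b a) := measurableSet_noExitE b a
  have hone : μ ((hitBefore b a ∪ hitBefore a b) ∪ noExitE b a) = 1 := by
    refine le_antisymm prob_le_one ?_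
    calc (1:ℝ≥0∞) = μ {X : Traj | X 0 = 0} := (hg.law0.start).symm
      _ ≤ _ := measure_mono hcover
  rw [measure_union hdisj2 hmeas3, measure_union hdisj1 hmeas2,
    noExit_null hg a b ha hb, add_zero] at hone
  have htr : (μ (hitBefore b a)).toReal + (μ (hitBefore a b)).toReal = 1 := by
    rw [← ENNReal.toReal_add (measure_ne_top _ _) (measure_ne_top _ _), hone,
      ENNReal.toReal_one]
  have := ruin_value hg a b ha hb
  rw [hμdef] at htr ⊢
  linarith [this, htr]

/-- Main quantitative bound: probability of hitting a negative site before a positive one. -/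
lemma hit_down_le (hg : GoodEnv Pq ω) (a b : ℤ) (ha : a < 0) (hb : 0 < b)
    (j0 : ℕ) (hj0 : (j0:ℤ) = -a) :
    (Pq ω (hitBefore a b)).toReal ≤ sprod ω a j0 * Sinf ω := by
  have hα := hg.alphaPos
  have hLcast : (((b - a).toNat):ℤ) = b - a := Int.toNat_of_nonneg (by omega)
  set L := (b - a).toNat with hLdef
  have hj0' : j0 = (-a).toNat := by omega
  rw [ruin_partition hg a b ha hb, ← hj0']
  have hSL1 : 1 ≤ Ssum ω a L := Ssum_one_le hα a (by omega)
  have hSpos : 0 < Ssum ω a L := lt_of_lt_of_le one_pos hSL1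
  have hj0L : j0 ≤ L := by omega
  have h1 : 1 - Ssum ω a j0 / Ssum ω a L = (Ssum ω a L - Ssum ω a j0) / Ssum ω a L := by
    field_simp
  rw [h1]
  have hnum : 0 ≤ Ssum ω a L - Ssum ω a j0 := by
    have : Ssum ω a j0 ≤ Ssum ω a L := by
      unfold Ssum
      exact Finset.sum_le_sum_of_subset_of_nonneg
        (Finset.range_subset_range.mpr hj0L) (fun i _ _ => sprod_nonneg hα a i)
    linarith
  have h2 : (Ssum ω a L - Ssum ω a j0) / Ssum ω a L ≤ Ssum ω a L - Ssum ω a j0 :=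
    div_le_self hnum hSL1
  refine le_trans h2 ?_
  have h3 : Ssum ω a L = Ssum ω a j0 + ∑ r ∈ Finset.range (L - j0), sprod ω a (j0 + r) := by
    have h := Finset.sum_range_add (fun m => sprod ω a m) j0 (L - j0)
    have hL' : j0 + (L - j0) = L := by omega
    rw [hL'] at h
    exact h
  have h3' : Ssum ω a L - Ssum ω a j0 = ∑ r ∈ Finset.range (L - j0), sprod ω a (j0 + r) := by
    linarith
  rw [h3']
  have h4 : ∀ r : ℕ, sprod ω a (j0 + r) = sprod ω a j0 * sprod ω 0 r := by
    intro r
    rw [sprod_add, show a + (j0:ℤ) = 0 by omega]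
  calc ∑ r ∈ Finset.range (L - j0), sprod ω a (j0 + r)
      = sprod ω a j0 * ∑ r ∈ Finset.range (L - j0), sprod ω 0 r := by
        rw [Finset.mul_sum]
        exact Finset.sum_congr rfl fun r _ => h4 r
    _ ≤ sprod ω a j0 * Sinf ω := by
        refine mul_le_mul_of_nonneg_left ?_ (sprod_nonneg hα a j0)
        exact Summable.sum_le_tsum (Finset.range _) (fun k _ => sprod_nonneg hα 0 k) (hg.summ 0)

end Transience


section Transience2

variable {Pq : Env → Measure Traj} {ω : Env}

/-- A good walk reaches every nonnegative level. -/
lemma never_hit_null (hg : GoodEnv Pq ω) (b : ℤ) (hb : 0 ≤ b) :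
    Pq ω {X : Traj | ∀ t, X t ≠ b} = 0 := by
  haveI := hg.law0.prob
  rcases eq_or_lt_of_le hb with rfl | hbpos
  · refine le_antisymm (le_trans (measure_mono ?_)
      (le_of_eq (start_compl_null hg.law0))) zero_le
    intro X hX h0
    exact hX 0 h0
  · have hbound : ∀ m : ℕ, (Pq ω {X : Traj | ∀ t, X t ≠ b}).toReal
        ≤ sprod ω (-(((m+1:ℕ)):ℤ)) (m+1) * Sinf ω := by
      intro m
      set a : ℤ := -(((m+1:ℕ)):ℤ) with ha
      have ha0 : a < 0 := by omega
      have hsub : {X : Traj | ∀ t, X t ≠ b} ⊆ hitBefore a b ∪ noExitE b a := by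
        intro X hX
        by_cases hex : ∃ t, X t = a
        · obtain ⟨t, ht⟩ := hex
          exact Or.inl ⟨t, ht, fun u _ => hX u⟩
        · push_neg at hex
          exact Or.inr fun t => ⟨hX t, hex t⟩
      have hle : Pq ω {X : Traj | ∀ t, X t ≠ b} ≤ Pq ω (hitBefore a b) := by
        refine le_trans (measure_mono hsub) ?_
        refine le_trans (measure_union_le _ _) ?_
        rw [noExit_null hg a b ha0 hbpos, add_zero]
      have htr : (Pq ω {X : Traj | ∀ t, X t ≠ b}).toReal
          ≤ (Pq ω (hitBefore a b)).toReal :=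
        ENNReal.toReal_mono (measure_ne_top _ _) hle
      refine le_trans htr ?_
      exact hit_down_le hg a b ha0 hbpos (m+1) (by omega)
    have htend : Tendsto (fun m : ℕ => sprod ω (-(((m+1:ℕ)):ℤ)) (m+1) * Sinf ω)
        atTop (𝓝 0) := by
      have h1 : Tendsto (fun m : ℕ => sprod ω (-(((m+1:ℕ)):ℤ)) (m+1)) atTop (𝓝 0) :=
        hg.left0.comp (tendsto_add_atTop_nat 1)
      have h2 := h1.mul_const (Sinf ω)
      rwa [zero_mul] at h2
    have hto : (Pq ω {X : Traj | ∀ t, X t ≠ b}).toReal ≤ 0 := ge_of_tendsto' htend hbound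
    have h0' : (Pq ω {X : Traj | ∀ t, X t ≠ b}).toReal = 0 :=
      le_antisymm hto ENNReal.toReal_nonneg
    exact ((ENNReal.toReal_eq_zero_iff _).mp h0').resolve_right (measure_ne_top _ _)

/-- Discrete intermediate value property for nearest-neighbour paths. -/
lemma ivt_path (X : Traj) (hne : X ∈ nearestSet) :
    ∀ u : ℕ, ∀ m : ℤ, min (X 0) (X u) ≤ m → m ≤ max (X 0) (X u) → ∃ v ≤ u, X v = m := by
  intro u
  induction u with
  | zero => intro m h1 h2; exact ⟨0, le_rfl, by omega⟩
  | succ u ih =>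
    intro m h1 h2
    by_cases hmid : min (X 0) (X u) ≤ m ∧ m ≤ max (X 0) (X u)
    · obtain ⟨v, hv, hvm⟩ := ih m hmid.1 hmid.2
      exact ⟨v, by omega, hvm⟩
    · have hstep := hne u
      refine ⟨u+1, le_rfl, ?_⟩
      rcases hstep with h | h <;> omega

/-- Quantitative bound for ever hitting a negative site. -/
lemma ever_hit_le (hg : GoodEnv Pq ω) (c : ℤ) (hc : c < 0) (j0 : ℕ) (hj0 : (j0:ℤ) = -c) :
    Pq ω (hitSet c) ≤ ENNReal.ofReal (sprod ω c j0 * Sinf ω) := by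
  haveI := hg.law0.prob
  set G0 : Set Traj := startSet ∩ nearestSet with hG0
  set A : ℕ → Set Traj := fun n => hitBefore c ((n:ℤ)+1) ∩ G0 with hA
  have hmono : Monotone A := by
    intro n n' hnn' X hX
    obtain ⟨⟨t, htc, hall⟩, hXG⟩ := hX
    obtain ⟨h0, hnear⟩ := hXG
    have h0' : X 0 = 0 := h0
    refine ⟨⟨t, htc, fun u hu hub => ?_⟩, ⟨h0, hnear⟩⟩
    have hub' : X u = (n':ℤ) + 1 := hub
    have hcast : (n:ℤ) ≤ (n':ℤ) := by exact_mod_cast hnn'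
    have hmin : min (X 0) (X u) ≤ (n:ℤ)+1 := by omega
    have hmax : (n:ℤ)+1 ≤ max (X 0) (X u) := by omega
    obtain ⟨v, hv, hvm⟩ := ivt_path X hnear u ((n:ℤ)+1) hmin hmax
    exact hall v (le_trans hv hu) hvm
  have hcover : hitSet c ∩ G0 ⊆ ⋃ n, A n := by
    rintro X ⟨⟨t, htc⟩, hXG⟩
    set M := (Finset.range (t+1)).sup (fun u => (X u).toNat) with hM
    refine Set.mem_iUnion.mpr ⟨M, ⟨t, htc, fun u hu hub => ?_⟩, hXG⟩
    have hmem : u ∈ Finset.range (t+1) := Finset.mem_range.mpr (by omega)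
    have h1 : (X u).toNat ≤ M := by
      rw [hM]
      exact Finset.le_sup (f := fun u => (X u).toNat) hmem
    have h2 : X u ≤ ((X u).toNat : ℤ) := Int.self_le_toNat _
    have h3 : (((X u).toNat):ℤ) ≤ (M:ℤ) := by exact_mod_cast h1
    omega
  have hnull : Pq ω G0ᶜ = 0 := by
    rw [hG0, Set.compl_inter]
    exact measure_union_null (start_compl_null hg.law0) (nearest_compl_null hg.law0)
  have hsplit : Pq ω (hitSet c) ≤ Pq ω (⋃ n, A n) + Pq ω G0ᶜ := by
    refine le_trans (measure_mono ?_) (measure_union_le _ _)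
    intro X hX
    by_cases hXG : X ∈ G0
    · exact Or.inl (hcover ⟨hX, hXG⟩)
    · exact Or.inr hXG
  rw [hnull, add_zero] at hsplit
  have hiUnion : Pq ω (⋃ n, A n) = ⨆ n, Pq ω (A n) :=
    hmono.directed_le.measure_iUnion
  rw [hiUnion] at hsplit
  refine le_trans hsplit (iSup_le fun n => ?_)
  have hb : (0:ℤ) < (n:ℤ)+1 := by omega
  refine le_trans (measure_mono (Set.inter_subset_left)) ?_
  rw [ENNReal.le_ofReal_iff_toReal_le (measure_ne_top _ _)
    (mul_nonneg (sprod_nonneg hg.alphaPos _ _) (Sinf_nonneg hg.alphaPos))]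
  exact hit_down_le hg c ((n:ℤ)+1) hc hb j0 hj0

end Transience2


/-! #### Strong Markov decomposition at the first hitting time -/

section StrongMarkov

variable {Pq : Env → Measure Traj} {ω : Env}

def extv {k : ℕ} (v : Fin (k+1) → ℤ) : ℕ → ℤ :=
  fun j => if h : j < k + 1 then v ⟨j, h⟩ else 0

def HitIdx (N : ℤ) : Type :=
  Σ k : ℕ, {v : Fin (k+1) → ℤ // v (Fin.last k) = N ∧
    ∀ j : Fin (k+1), (j:ℕ) < k → v j ≠ N}

instance (N : ℤ) : Countable (HitIdx N) := by
  unfold HitIdx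
  infer_instance

def hitCyl (N : ℤ) (i : HitIdx N) : Set Traj := cyl i.1 (extv i.2.1)

lemma mem_hitCyl_eval {N : ℤ} {k : ℕ} {v : Fin (k+1) → ℤ}
    {hv : v (Fin.last k) = N ∧ ∀ j : Fin (k+1), (j:ℕ) < k → v j ≠ N} {X : Traj}
    (hX : X ∈ hitCyl N ⟨k, v, hv⟩) (j : ℕ) (hj : j ≤ k) :
    X j = v ⟨j, by omega⟩ := by
  have h := hX j hj
  rwa [extv, dif_pos (by omega : j < k + 1)] at h

lemma hitCyl_inj {N : ℤ} (i i' : HitIdx N) (X : Traj)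
    (h1 : X ∈ hitCyl N i) (h2 : X ∈ hitCyl N i') : i = i' := by
  obtain ⟨k, v, hvN, hvlt⟩ := i
  obtain ⟨k', v', hvN', hvlt'⟩ := i'
  have key : ∀ (kk kk' : ℕ) (vv : Fin (kk+1) → ℤ) (vv' : Fin (kk'+1) → ℤ),
      vv (Fin.last kk) = N → (∀ j : Fin (kk'+1), (j:ℕ) < kk' → vv' j ≠ N) →
      (∀ (j : ℕ) (hj : j ≤ kk), X j = vv ⟨j, by omega⟩) →
      (∀ (j : ℕ) (hj : j ≤ kk'), X j = vv' ⟨j, by omega⟩) →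
      ¬ (kk < kk') := by
    intro kk kk' vv vv' hN hlt hXv hXv' hlt'
    have e1 : X kk = N := by
      rw [hXv kk le_rfl]
      exact hN
    have e2 : X kk ≠ N := by
      rw [hXv' kk (by omega)]
      exact hlt ⟨kk, by omega⟩ (by simpa using hlt')
    exact e2 e1
  have hXv : ∀ (j : ℕ) (hj : j ≤ k), X j = v ⟨j, by omega⟩ :=
    fun j hj => mem_hitCyl_eval h1 j hj
  have hXv' : ∀ (j : ℕ) (hj : j ≤ k'), X j = v' ⟨j, by omega⟩ :=
    fun j hj => mem_hitCyl_eval h2 j hj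
  have hkk : k = k' := by
    rcases Nat.lt_trichotomy k k' with h | h | h
    · exact absurd h (key k k' v v' hvN hvlt' hXv hXv')
    · exact h
    · exact absurd h (key k' k v' v hvN' hvlt hXv' hXv)
  subst hkk
  have hv : v = v' := by
    funext j
    have e1 := hXv j.val (Nat.lt_succ_iff.mp j.2)
    have e2 := hXv' j.val (Nat.lt_succ_iff.mp j.2)
    have e3 : v ⟨j.val, by omega⟩ = v' ⟨j.val, by omega⟩ := by rw [← e1, ← e2]
    simpa using e3
  subst hv
  rfl

lemma hitCyl_disjoint (N : ℤ) : Pairwise (Function.onFun Disjoint (hitCyl N)) := by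
  intro i i' hne
  rw [Function.onFun]
  apply Set.disjoint_left.mpr
  intro X hX hX'
  exact hne (hitCyl_inj i i' X hX hX')

lemma hitCyl_cover (N : ℤ) (X : Traj) (hX : ∃ t, X t = N) :
    ∃ i : HitIdx N, X ∈ hitCyl N i := by
  classical
  refine ⟨⟨Nat.find hX, fun j => X j.val, Nat.find_spec hX, fun j hj => Nat.find_min hX hj⟩,
    fun j hj => ?_⟩
  rw [extv, dif_pos (Nat.lt_succ_of_le hj)]

/-- Strong Markov upper bound at the first hitting time of level `N`. -/
lemma hit_decomp (hg : GoodEnv Pq ω) (N : ℕ) (E : Set Traj) (hE : MeasurableSet E)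
    (A : Set Traj)
    (hsub : ∀ X ∈ A, X 0 = 0 → X ∈ nearestSet →
      ∀ k : ℕ, X k = (N:ℤ) → (∀ j < k, X j ≠ (N:ℤ)) → shiftT k (N:ℤ) X ∈ E) :
    Pq ω (A ∩ (startSet ∩ nearestSet)) ≤ Pq (shiftE (N:ℤ) ω) E := by
  haveI := hg.law0.prob
  haveI := (hg.law (N:ℤ)).prob
  have hnever : Pq ω {X : Traj | ∀ t, X t ≠ (N:ℤ)} = 0 := never_hit_null hg N (by omega)
  have hcov : A ∩ (startSet ∩ nearestSet) ⊆
      {X : Traj | ∀ t, X t ≠ (N:ℤ)}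
        ∪ ⋃ i : HitIdx (N:ℤ), (hitCyl (N:ℤ) i ∩ shiftT i.1 (N:ℤ) ⁻¹' E) := by
    rintro X ⟨hXA, hX0, hXn⟩
    by_cases hhit : ∃ t, X t = (N:ℤ)
    · right
      obtain ⟨i, hi⟩ := hitCyl_cover (N:ℤ) X hhit
      refine Set.mem_iUnion.mpr ⟨i, hi, ?_⟩
      obtain ⟨k, v, hvN, hvlt⟩ := i
      have hXk : X k = (N:ℤ) := by
        rw [mem_hitCyl_eval hi k le_rfl]
        exact hvN
      have hXj : ∀ j < k, X j ≠ (N:ℤ) := by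
        intro j hj
        rw [mem_hitCyl_eval hi j (by omega)]
        exact hvlt ⟨j, by omega⟩ hj
      exact hsub X hXA hX0 hXn k hXk hXj
    · left
      push_neg at hhit
      exact hhit
  refine le_trans (measure_mono hcov) ?_
  refine le_trans (measure_union_le _ _) ?_
  rw [hnever, zero_add]
  refine le_trans (measure_iUnion_le _) ?_
  have hterm : ∀ i : HitIdx (N:ℤ),
      Pq ω (hitCyl (N:ℤ) i ∩ shiftT i.1 (N:ℤ) ⁻¹' E)
        = Pq ω (hitCyl (N:ℤ) i) * Pq (shiftE (N:ℤ) ω) E := by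
    intro i
    have hzk : extv i.2.1 i.1 = (N:ℤ) := by
      rw [extv, dif_pos (Nat.lt_succ_self i.1)]
      exact i.2.2.1
    have h := markov hg.law0 hg.bounds i.1 (extv i.2.1)
      (by rw [hzk]; exact hg.law (N:ℤ)) E hE
    rwa [hzk] at h
  calc ∑' i, Pq ω (hitCyl (N:ℤ) i ∩ shiftT i.1 (N:ℤ) ⁻¹' E)
      = ∑' i, Pq ω (hitCyl (N:ℤ) i) * Pq (shiftE (N:ℤ) ω) E := tsum_congr hterm
    _ = (∑' i, Pq ω (hitCyl (N:ℤ) i)) * Pq (shiftE (N:ℤ) ω) E := ENNReal.tsum_mul_right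
    _ ≤ 1 * Pq (shiftE (N:ℤ) ω) E := by
        refine mul_le_mul_left ?_ _
        rw [← measure_iUnion (hitCyl_disjoint (N:ℤ)) (fun i => measurableSet_cyl _ _)]
        exact prob_le_one
    _ = Pq (shiftE (N:ℤ) ω) E := one_mul _

end StrongMarkov


/-! #### Finiteness of visits -/

section InfiniteVisits

variable {Pq : Env → Measure Traj} {ω : Env}

lemma shiftT_nearest {X : Traj} (hXn : X ∈ nearestSet) (k : ℕ) (c : ℤ) :
    shiftT k c X ∈ nearestSet := by
  intro u
  rcases hXn (u + k) with h | h
  · left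
    show X (u + 1 + k) - c = X (u + k) - c + 1
    rw [show u + 1 + k = u + k + 1 by omega]
    omega
  · right
    show X (u + 1 + k) - c = X (u + k) - c - 1
    rw [show u + 1 + k = u + k + 1 by omega]
    omega

lemma good_split (hg : GoodEnv Pq ω) (A : Set Traj) :
    Pq ω A ≤ Pq ω (A ∩ (startSet ∩ nearestSet)) := by
  haveI := hg.law0.prob
  have hnull : Pq ω (startSet ∩ nearestSet)ᶜ = 0 := by
    rw [Set.compl_inter]
    exact measure_union_null (start_compl_null hg.law0) (nearest_compl_null hg.law0)
  have hsplit : Pq ω A ≤ Pq ω (A ∩ (startSet ∩ nearestSet)) + Pq ω (startSet ∩ nearestSet)ᶜ := by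
    refine le_trans (measure_mono ?_) (measure_union_le _ _)
    intro X hX
    by_cases h : X ∈ startSet ∩ nearestSet
    · exact Or.inl ⟨hX, h⟩
    · exact Or.inr h
  rwa [hnull, add_zero] at hsplit

lemma infinite_neg_null (hg : GoodEnv Pq ω) :
    Pq ω {X : Traj | {t : ℕ | X t < 0}.Infinite} = 0 := by
  haveI := hg.law0.prob
  set A : Set Traj := {X : Traj | {t : ℕ | X t < 0}.Infinite} with hA
  have hkey : ∀ N : ℕ, Pq ω A ≤
      ENNReal.ofReal (alpha ω 0 * ∑' k, sprod ω 0 (N + k)) := by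
    intro N
    have hgN : GoodEnv Pq (shiftE (N:ℤ) ω) := hg.shift N
    have hc : (-(N:ℤ)-1) < 0 := by omega
    have hever := ever_hit_le hgN (-(N:ℤ)-1) hc (N+1) (by push_cast; ring)
    have hsub : ∀ X ∈ A, X 0 = 0 → X ∈ nearestSet →
        ∀ k : ℕ, X k = (N:ℤ) → (∀ j < k, X j ≠ (N:ℤ)) →
          shiftT k (N:ℤ) X ∈ hitSet (-(N:ℤ)-1) := by
      intro X hXA hX0 hXn k hXk _
      obtain ⟨t, htS, htk⟩ := Set.Infinite.exists_gt hXA k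
      have htneg : X t < 0 := htS
      have hY0 : shiftT k (N:ℤ) X 0 = 0 := by
        show X (0 + k) - N = 0
        rw [zero_add, hXk]
        ring
      have hYn : shiftT k (N:ℤ) X ∈ nearestSet := shiftT_nearest hXn k N
      have hYt : shiftT k (N:ℤ) X (t - k) ≤ -(N:ℤ) - 1 := by
        show X (t - k + k) - N ≤ _
        rw [show t - k + k = t by omega]
        omega
      have hmin : min (shiftT k (N:ℤ) X 0) (shiftT k (N:ℤ) X (t-k)) ≤ -(N:ℤ)-1 := by omega
      have hmax : -(N:ℤ)-1 ≤ max (shiftT k (N:ℤ) X 0) (shiftT k (N:ℤ) X (t-k)) := by omega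
      obtain ⟨v, hv, hvm⟩ := ivt_path (shiftT k (N:ℤ) X) hYn (t-k) (-(N:ℤ)-1) hmin hmax
      exact ⟨v, hvm⟩
    have hdec := hit_decomp hg N (hitSet (-(N:ℤ)-1)) (measurableSet_hitSet _) A hsub
    refine le_trans (good_split hg A) (le_trans hdec (le_trans hever (le_of_eq ?_)))
    congr 1
    rw [sprod_shiftE]
    rw [show (-(N:ℤ)-1) + N = -1 by ring]
    have e2 : sprod ω (-1) (N+1) = alpha ω 0 * sprod ω 0 N := by
      have h := sprod_add ω (-1) 1 N
      have h1 : sprod ω (-1) 1 = alpha ω 0 := by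
        simp [sprod]
      rw [show ((-1:ℤ) + ((1:ℕ):ℤ)) = 0 by norm_num, h1] at h
      rw [show N + 1 = 1 + N by omega, h]
    have e3 : Sinf (shiftE (N:ℤ) ω) = ∑' k, sprod ω ((N:ℤ)) k := by
      unfold Sinf
      exact tsum_congr fun k => by rw [sprod_shiftE, zero_add]
    rw [e2, e3, mul_assoc]
    congr 1
    rw [← tsum_mul_left]
    refine tsum_congr fun k => ?_
    rw [sprod_add ω 0 N k, zero_add]
  have htend : Tendsto (fun N : ℕ => ENNReal.ofReal (alpha ω 0 * ∑' k, sprod ω 0 (N + k)))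
      atTop (𝓝 0) := by
    have h1 : Tendsto (fun N : ℕ => alpha ω 0 * ∑' k, sprod ω 0 (N + k)) atTop (𝓝 0) := by
      have h2 := (tail_tendsto hg.summ0).const_mul (alpha ω 0)
      rwa [mul_zero] at h2
    have h3 := (ENNReal.continuous_ofReal.tendsto 0).comp h1
    rwa [ENNReal.ofReal_zero] at h3
  exact le_antisymm (ge_of_tendsto' htend hkey) zero_le

lemma infinite_visits_null (hg : GoodEnv Pq ω) (n : ℤ) :
    Pq ω {X : Traj | {t : ℕ | X t = n}.Infinite} = 0 := by
  haveI := hg.law0.prob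
  rcases lt_or_ge n 0 with hn | hn
  · refine le_antisymm (le_trans (measure_mono ?_)
      (le_of_eq (infinite_neg_null hg))) zero_le
    intro X hX
    refine Set.Infinite.mono ?_ hX
    intro t ht
    simp only [Set.mem_setOf_eq] at ht ⊢
    omega
  · set A := {X : Traj | {t : ℕ | X t = n}.Infinite} with hA
    have hn0c : ((n.toNat:ℕ):ℤ) = n := Int.toNat_of_nonneg hn
    have hkey : ∀ M : ℕ, Pq ω A ≤ ENNReal.ofReal (∑' k, sprod ω n ((M+1) + k)) := by
      intro M
      set N : ℕ := n.toNat + 1 + M with hN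
      have hgN := hg.shift (N:ℤ)
      have hc : n - (N:ℤ) < 0 := by omega
      have hever := ever_hit_le hgN (n - (N:ℤ)) hc (M+1) (by push_cast; omega)
      have hsub : ∀ X ∈ A, X 0 = 0 → X ∈ nearestSet →
          ∀ k : ℕ, X k = (N:ℤ) → (∀ j < k, X j ≠ (N:ℤ)) →
            shiftT k (N:ℤ) X ∈ hitSet (n - (N:ℤ)) := by
        intro X hXA _ _ k hXk _
        obtain ⟨t, htS, htk⟩ := Set.Infinite.exists_gt hXA k
        refine ⟨t - k, ?_⟩
        show X (t - k + k) - N = n - N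
        rw [show t - k + k = t by omega]
        have hXt : X t = n := htS
        omega
      have hdec := hit_decomp hg N (hitSet (n - (N:ℤ))) (measurableSet_hitSet _) A hsub
      refine le_trans (good_split hg A) (le_trans hdec (le_trans hever (le_of_eq ?_)))
      congr 1
      rw [sprod_shiftE, show n - (N:ℤ) + N = n by ring]
      have e3 : Sinf (shiftE (N:ℤ) ω) = ∑' k, sprod ω ((N:ℤ)) k := by
        unfold Sinf
        exact tsum_congr fun k => by rw [sprod_shiftE, zero_add]
      rw [e3, ← tsum_mul_left]
      refine tsum_congr fun k => ?_
      rw [sprod_add ω n (M+1) k]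
      congr 2
      omega
    have htend : Tendsto (fun M : ℕ => ENNReal.ofReal (∑' k, sprod ω n ((M+1) + k)))
        atTop (𝓝 0) := by
      have h1 : Tendsto (fun M : ℕ => ∑' k, sprod ω n ((M+1) + k)) atTop (𝓝 0) :=
        (tail_tendsto (hg.summ n)).comp (tendsto_add_atTop_nat 1)
      have h3 := (ENNReal.continuous_ofReal.tendsto 0).comp h1
      rwa [ENNReal.ofReal_zero] at h3
    exact le_antisymm (ge_of_tendsto' htend hkey) zero_le

/-! #### The tail events `Em` -/

lemma Em_antitone : Antitone Em := by
  intro m m' hmm' X hX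
  obtain ⟨T, hTcard, hTneg⟩ := hX
  obtain ⟨T', hT'sub, hT'card⟩ := T.exists_subset_card_eq (n := m+1) (by omega)
  exact ⟨T', hT'card, fun t ht => hTneg t (hT'sub ht)⟩

lemma iInter_Em_subset : ⋂ m, Em m ⊆ {X : Traj | {t : ℕ | X t < 0}.Infinite} := by
  intro X hX
  by_contra hfin
  simp only [Set.mem_setOf_eq, Set.not_infinite] at hfin
  obtain ⟨T, hTcard, hTneg⟩ := Set.mem_iInter.mp hX hfin.toFinset.card
  have hsub : T ⊆ hfin.toFinset := fun t ht => hfin.mem_toFinset.mpr (hTneg t ht)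
  have := Finset.card_le_card hsub
  omega

lemma Em_tendsto (hg : GoodEnv Pq ω) : Tendsto (fun m => Pq ω (Em m)) atTop (𝓝 0) := by
  haveI := hg.law0.prob
  have h := tendsto_measure_iInter_atTop (μ := Pq ω)
    (fun m => (measurableSet_Em m).nullMeasurableSet) Em_antitone ⟨0, measure_ne_top _ _⟩
  have h0 : Pq ω (⋂ m, Em m) = 0 :=
    le_antisymm (le_trans (measure_mono iInter_Em_subset)
      (le_of_eq (infinite_neg_null hg))) zero_le
  rw [h0] at h
  exact h

end InfiniteVisits


/-! #### Path combinatorics -/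

section Combinatorics

lemma ncard_Iio (k : ℕ) : Set.ncard {t : ℕ | t < k} = k := by
  have h : {t : ℕ | t < k} = ↑(Finset.range k) := by ext t; simp
  rw [h, Set.ncard_coe_finset, Finset.card_range]

lemma finite_band (X : Traj) (hfin : ∀ n : ℤ, {t : ℕ | X t = n}.Finite) (N : ℕ) :
    {t : ℕ | 0 ≤ X t ∧ X t < (N:ℤ)}.Finite := by
  have hsub : {t : ℕ | 0 ≤ X t ∧ X t < (N:ℤ)}
      ⊆ ⋃ n ∈ Finset.range N, {t : ℕ | X t = (n:ℤ)} := by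
    rintro t ⟨h1, h2⟩
    have hex : ∃ n : ℕ, n < N ∧ X t = (n:ℤ) := ⟨(X t).toNat, by omega, by omega⟩
    obtain ⟨n, hn, hXn⟩ := hex
    exact Set.mem_biUnion (Finset.mem_range.mpr hn) hXn
  exact Set.Finite.subset
    (Set.Finite.biUnion (Finset.range N).finite_toSet fun n _ => hfin n) hsub

lemma occ_eq (X : Traj) (hfin : ∀ n : ℤ, {t : ℕ | X t = n}.Finite) (N : ℕ) :
    occTime X N = Set.ncard {t : ℕ | 0 ≤ X t ∧ X t < (N:ℤ)} := by
  induction N with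
  | zero =>
    simp only [occTime, Finset.range_zero, Finset.sum_empty]
    have h : {t : ℕ | 0 ≤ X t ∧ X t < ((0:ℕ):ℤ)} = ∅ := by
      ext t
      simp only [Set.mem_setOf_eq, Set.mem_empty_iff_false, iff_false, not_and]
      intro h1
      omega
    rw [h, Set.ncard_empty]
  | succ N ih =>
    have hstep : occTime X (N+1) = occTime X N + visits X (N:ℤ) := by
      unfold occTime
      rw [Finset.sum_range_succ]
    rw [hstep, ih]
    have hsplit : {t : ℕ | 0 ≤ X t ∧ X t < ((N+1:ℕ):ℤ)}
        = {t : ℕ | 0 ≤ X t ∧ X t < (N:ℤ)} ∪ {t : ℕ | X t = (N:ℤ)} := by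
      ext t
      simp only [Set.mem_setOf_eq, Set.mem_union]
      constructor
      · rintro ⟨h1, h2⟩
        by_cases h : X t = (N:ℤ)
        · exact Or.inr h
        · push_cast at h2
          exact Or.inl ⟨h1, by omega⟩
      · rintro (⟨h1, h2⟩ | h)
        · refine ⟨h1, by push_cast; omega⟩
        · refine ⟨by omega, by push_cast; omega⟩
    have hdisj : Disjoint {t : ℕ | 0 ≤ X t ∧ X t < (N:ℤ)} {t : ℕ | X t = (N:ℤ)} := by
      apply Set.disjoint_left.mpr
      rintro t ⟨_, h2⟩ h3
      simp only [Set.mem_setOf_eq] at h3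
      omega
    rw [hsplit, Set.ncard_union_eq hdisj (finite_band X hfin N) (hfin (N:ℤ))]
    rfl

lemma comb (X : Traj) (h0 : X 0 = 0) (hne : X ∈ nearestSet)
    (hfin : ∀ n : ℤ, {t : ℕ | X t = n}.Finite) (hnegfin : {t : ℕ | X t < 0}.Finite)
    (N : ℕ) (hN : 1 ≤ N) (k : ℕ) (hk : X k = (N:ℤ)) (hkmin : ∀ j < k, X j ≠ (N:ℤ))
    (m : ℕ) (hbig : (m : ℝ) < |((occTime X N : ℝ) - (hitTime X N : ℝ))|) :
    m < Set.ncard {t : ℕ | X t < 0} ∨ m < Set.ncard {t : ℕ | k ≤ t ∧ X t < (N:ℤ)} := by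
  have hhit : hitTime X N = k := by
    unfold hitTime
    refine le_antisymm (Nat.sInf_le hk) ?_
    by_contra hlt
    push_neg at hlt
    have hmem : sInf {t : ℕ | X t = (N:ℤ)} ∈ {t : ℕ | X t = (N:ℤ)} :=
      Nat.sInf_mem ⟨k, hk⟩
    exact hkmin _ hlt hmem
  have hbefore : ∀ t < k, X t < (N:ℤ) := by
    intro t ht
    by_contra hge
    push_neg at hge
    have hmin : min (X 0) (X t) ≤ (N:ℤ) := by omega
    have hmax : (N:ℤ) ≤ max (X 0) (X t) := by omega
    obtain ⟨v, hv, hvm⟩ := ivt_path X hne t (N:ℤ) hmin hmax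
    exact hkmin v (by omega) hvm
  set B' := {t : ℕ | t < k ∧ X t < 0} with hB'
  set C := {t : ℕ | t < k ∧ 0 ≤ X t ∧ X t < (N:ℤ)} with hC
  set W' := {t : ℕ | k ≤ t ∧ 0 ≤ X t ∧ X t < (N:ℤ)} with hW'
  have hBfin : B'.Finite := hnegfin.subset (fun t ht => ht.2)
  have hCfin : C.Finite := (finite_band X hfin N).subset (fun t ht => ht.2)
  have hWfin : W'.Finite := (finite_band X hfin N).subset (fun t ht => ht.2)
  have hksplit : k = B'.ncard + C.ncard := by
    have hunion : {t : ℕ | t < k} = B' ∪ C := by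
      ext t
      simp only [hB', hC, Set.mem_setOf_eq, Set.mem_union]
      constructor
      · intro ht
        have hlt := hbefore t ht
        by_cases hneg : X t < 0
        · exact Or.inl ⟨ht, hneg⟩
        · exact Or.inr ⟨ht, by omega, hlt⟩
      · rintro (⟨ht, _⟩ | ⟨ht, _⟩) <;> exact ht
    have hdisj : Disjoint B' C := by
      apply Set.disjoint_left.mpr
      rintro t ⟨_, h1⟩ ⟨_, h2, _⟩
      omega
    calc k = Set.ncard {t : ℕ | t < k} := (ncard_Iio k).symm
      _ = (B' ∪ C).ncard := by rw [hunion]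
      _ = B'.ncard + C.ncard := Set.ncard_union_eq hdisj hBfin hCfin
  have hocc : occTime X N = C.ncard + W'.ncard := by
    rw [occ_eq X hfin N]
    have hunion : {t : ℕ | 0 ≤ X t ∧ X t < (N:ℤ)} = C ∪ W' := by
      ext t
      simp only [hC, hW', Set.mem_setOf_eq, Set.mem_union]
      constructor
      · rintro ⟨h1, h2⟩
        rcases Nat.lt_or_ge t k with h | h
        · exact Or.inl ⟨h, h1, h2⟩
        · exact Or.inr ⟨h, h1, h2⟩
      · rintro (⟨_, h1, h2⟩ | ⟨_, h1, h2⟩) <;> exact ⟨h1, h2⟩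
    have hdisj : Disjoint C W' := by
      apply Set.disjoint_left.mpr
      rintro t ⟨h1, _⟩ ⟨h2, _⟩
      omega
    rw [hunion, Set.ncard_union_eq hdisj hCfin hWfin]
  rw [hhit, hocc] at hbig
  have hWB : (m:ℝ) < (W'.ncard:ℝ) ∨ (m:ℝ) < (B'.ncard:ℝ) := by
    rcases abs_cases (((C.ncard + W'.ncard : ℕ) : ℝ) - ((k : ℕ):ℝ)) with ⟨heq, _⟩ | ⟨heq, _⟩
    · left
      rw [heq] at hbig
      have hc := hksplit
      have hBnn : (0:ℝ) ≤ (B'.ncard:ℝ) := Nat.cast_nonneg _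
      have hcast : ((k:ℕ):ℝ) = (B'.ncard:ℝ) + (C.ncard:ℝ) := by exact_mod_cast hc
      push_cast at hbig
      linarith
    · right
      rw [heq] at hbig
      have hc := hksplit
      have hWnn : (0:ℝ) ≤ (W'.ncard:ℝ) := Nat.cast_nonneg _
      have hcast : ((k:ℕ):ℝ) = (B'.ncard:ℝ) + (C.ncard:ℝ) := by exact_mod_cast hc
      push_cast at hbig
      linarith
  rcases hWB with h | h
  · right
    have hWle : W'.ncard ≤ Set.ncard {t : ℕ | k ≤ t ∧ X t < (N:ℤ)} := by
      refine Set.ncard_le_ncard ?_ ?_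
      · rintro t ⟨h1, _, h2⟩
        exact ⟨h1, h2⟩
      · refine Set.Finite.subset (hnegfin.union (finite_band X hfin N)) ?_
        rintro t ⟨_, h2⟩
        by_cases hneg : X t < 0
        · exact Or.inl hneg
        · exact Or.inr ⟨by omega, h2⟩
    have hlt : (m:ℝ) < (Set.ncard {t : ℕ | k ≤ t ∧ X t < (N:ℤ)} : ℝ) :=
      lt_of_lt_of_le h (by exact_mod_cast hWle)
    exact_mod_cast hlt
  · left
    have hBle : B'.ncard ≤ Set.ncard {t : ℕ | X t < 0} :=
      Set.ncard_le_ncard (fun t ht => ht.2) hnegfin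
    have hlt : (m:ℝ) < (Set.ncard {t : ℕ | X t < 0} : ℝ) :=
      lt_of_lt_of_le h (by exact_mod_cast hBle)
    exact_mod_cast hlt

end Combinatorics


/-! #### The key per-`N` bound -/

lemma key_bound {Pq : Env → Measure Traj} {ω : Env}
    (hg : GoodEnv Pq ω) (ε : ℝ) (hε : 0 < ε) (s : ℝ) (N : ℕ) (hN : 1 ≤ N) :
    Pq ω {X | ε < |((occTime X N : ℝ) - (hitTime X N : ℝ))| / (N : ℝ) ^ (1 / s)}
      ≤ Pq ω (Em ⌊ε * (N:ℝ) ^ (1/s)⌋₊)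
        + Pq (shiftE (N:ℤ) ω) (Em ⌊ε * (N:ℝ) ^ (1/s)⌋₊) := by
  haveI := hg.law0.prob
  set m := ⌊ε * (N:ℝ) ^ (1/s)⌋₊ with hm
  set Z : Set Traj := startSetᶜ ∪ nearestSetᶜ
      ∪ (⋃ n : ℤ, {X : Traj | {t : ℕ | X t = n}.Infinite})
      ∪ {X : Traj | {t : ℕ | X t < 0}.Infinite} ∪ {X : Traj | ∀ t, X t ≠ (N:ℤ)} with hZ
  have hZnull : Pq ω Z = 0 := by
    rw [hZ]
    refine measure_union_null (measure_union_null (measure_union_null (measure_union_null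
      (start_compl_null hg.law0) (nearest_compl_null hg.law0))
      (measure_iUnion_null fun n => infinite_visits_null hg n))
      (infinite_neg_null hg)) (never_hit_null hg N (by omega))
  set A : Set Traj := {X : Traj | (∀ n : ℤ, {t : ℕ | X t = n}.Finite)
      ∧ {t : ℕ | X t < 0}.Finite
      ∧ ∀ k : ℕ, X k = (N:ℤ) → (∀ j < k, X j ≠ (N:ℤ)) →
        m < Set.ncard {t : ℕ | k ≤ t ∧ X t < (N:ℤ)}} with hAdef
  have hcover : {X | ε < |((occTime X N : ℝ) - (hitTime X N : ℝ))| / (N : ℝ) ^ (1 / s)}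
      ⊆ Z ∪ (Em m ∪ (A ∩ (startSet ∩ nearestSet))) := by
    intro X hX
    by_cases hXZ : X ∈ Z
    · exact Or.inl hXZ
    · right
      rw [hZ] at hXZ
      simp only [Set.mem_union, not_or] at hXZ
      obtain ⟨⟨⟨⟨hXs, hXn⟩, hXfin⟩, hXneg⟩, hXhit⟩ := hXZ
      have h0 : X ∈ startSet := Set.notMem_compl_iff.mp hXs
      have hne : X ∈ nearestSet := Set.notMem_compl_iff.mp hXn
      have hfin : ∀ n : ℤ, {t : ℕ | X t = n}.Finite := fun n =>
        Set.not_infinite.mp fun hinf => hXfin (Set.mem_iUnion.mpr ⟨n, hinf⟩)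
      have hnegfin : {t : ℕ | X t < 0}.Finite := Set.not_infinite.mp hXneg
      by_cases hXE : X ∈ Em m
      · exact Or.inl hXE
      · right
        refine ⟨⟨hfin, hnegfin, fun k hk hkmin => ?_⟩, h0, hne⟩
        have hNpos : (0:ℝ) < (N:ℝ) ^ (1/s) := Real.rpow_pos_of_pos (by positivity) _
        have hbig : ε * (N:ℝ)^(1/s) < |(occTime X N : ℝ) - (hitTime X N : ℝ)| := by
          have hmem : ε < |((occTime X N : ℝ) - (hitTime X N : ℝ))| / (N : ℝ) ^ (1 / s) := hX
          exact (lt_div_iff₀ hNpos).mp hmem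
        have hmlt : (m:ℝ) < |(occTime X N : ℝ) - (hitTime X N : ℝ)| :=
          lt_of_le_of_lt (Nat.floor_le (by positivity)) hbig
        have hcomb := comb X h0 hne hfin hnegfin N hN k hk hkmin m hmlt
        rcases hcomb with h | h
        · exfalso
          apply hXE
          have hcard : m + 1 ≤ hnegfin.toFinset.card := by
            rw [Set.ncard_eq_toFinset_card _ hnegfin] at h
            omega
          obtain ⟨T, hTsub, hTcard⟩ := hnegfin.toFinset.exists_subset_card_eq hcard
          exact ⟨T, hTcard, fun t ht => hnegfin.mem_toFinset.mp (hTsub ht)⟩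
        · exact h
  calc Pq ω {X | ε < |((occTime X N : ℝ) - (hitTime X N : ℝ))| / (N : ℝ) ^ (1 / s)}
      ≤ Pq ω Z + (Pq ω (Em m) + Pq ω (A ∩ (startSet ∩ nearestSet))) := by
        refine le_trans (measure_mono hcover) ?_
        refine le_trans (measure_union_le _ _) ?_
        exact add_le_add le_rfl (measure_union_le _ _)
    _ ≤ Pq ω (Em m) + Pq (shiftE (N:ℤ) ω) (Em m) := by
        rw [hZnull, zero_add]
        refine add_le_add le_rfl ?_
        refine hit_decomp hg N (Em m) (measurableSet_Em m) A ?_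
        intro X hXA hX0 hXn k hXk hXmin
        obtain ⟨hfin, hnegfin, hW⟩ := hXA
        have hWcard := hW k hXk hXmin
        have hWfinite : {t : ℕ | k ≤ t ∧ X t < (N:ℤ)}.Finite := by
          refine Set.Finite.subset (hnegfin.union (finite_band X hfin N)) ?_
          rintro t ⟨_, h2⟩
          by_cases hneg : X t < 0
          · exact Or.inl hneg
          · exact Or.inr ⟨by omega, h2⟩
        have hcard : m + 1 ≤ hWfinite.toFinset.card := by
          rw [Set.ncard_eq_toFinset_card _ hWfinite] at hWcard
          omega
        obtain ⟨T, hTsub, hTcard⟩ := hWfinite.toFinset.exists_subset_card_eq hcard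
        have hinj : Set.InjOn (fun t => t - k) ↑T := by
          intro t ht t' ht' heq
          have h1 : k ≤ t := (hWfinite.mem_toFinset.mp (hTsub ht)).1
          have h2 : k ≤ t' := (hWfinite.mem_toFinset.mp (hTsub ht')).1
          simp only at heq
          omega
        refine ⟨T.image (fun t => t - k), ?_, ?_⟩
        · rw [Finset.card_image_of_injOn hinj, hTcard]
        · intro u hu
          obtain ⟨t, ht, rfl⟩ := Finset.mem_image.mp hu
          obtain ⟨h1, h2⟩ := hWfinite.mem_toFinset.mp (hTsub ht)
          show X (t - k + k) - N < 0
          rw [show t - k + k = t by omega]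
          omega

end Aux
/-- Lemma `LmS-T`: for every `ε > 0`, the annealed probability that
`|T_N − T̃_N| / N^{1/s} > ε` tends to `0` as `N → ∞`. -/
theorem occTime_hitTime_same_asymptotics
    (P : Measure Env) (Pq : Env → Measure Traj) (s : ℝ)
    (hEnv : EnvHyp P s) (hWalk : WalkHyp P Pq) :
    ∀ ε > 0, Tendsto
      (fun N : ℕ => ∫⁻ ω,
        Pq ω {X | ε < |((occTime X N : ℝ) - (hitTime X N : ℝ))| / (N : ℝ) ^ (1 / s)} ∂P)
      atTop (𝓝 0) := by
  intro ε hε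
  haveI := hEnv.prob
  have hgood := goodEnv_ae hEnv hWalk
  set h : ℕ → ℝ≥0∞ := fun m => ∫⁻ ω, Pq ω (Em m) ∂P with hh
  have hmeasEm : ∀ m, Measurable fun ω => Pq ω (Em m) := fun m =>
    hWalk.meas _ (measurableSet_Em m)
  have hhtend : Tendsto h atTop (𝓝 0) := by
    have hdct := MeasureTheory.tendsto_lintegral_of_dominated_convergence (μ := P)
      (F := fun m ω => Pq ω (Em m)) (f := fun _ => 0) (bound := fun _ => 1)
      hmeasEm ?_ ?_ ?_
    · simpa using hdct
    · intro m
      filter_upwards [hgood] with ω hg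
      haveI := hg.law0.prob
      exact prob_le_one
    · rw [lintegral_one, measure_univ]
      exact ENNReal.one_ne_top
    · filter_upwards [hgood] with ω hg
      exact Em_tendsto hg
  set mN : ℕ → ℕ := fun N => ⌊ε * (N:ℝ) ^ (1/s)⌋₊ with hmN
  have hmNtend : Tendsto mN atTop atTop := by
    refine tendsto_nat_floor_atTop.comp ?_
    have h1 : Tendsto (fun x : ℝ => x ^ (1/s)) atTop atTop :=
      tendsto_rpow_atTop (one_div_pos.mpr hEnv.spos)
    have h2 : Tendsto (fun N : ℕ => ((N:ℝ)) ^ (1/s)) atTop atTop :=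
      h1.comp tendsto_natCast_atTop_atTop
    exact Tendsto.const_mul_atTop hε h2
  have hFbound : ∀ N : ℕ, 1 ≤ N →
      (∫⁻ ω, Pq ω {X | ε < |((occTime X N : ℝ) - (hitTime X N : ℝ))| / (N : ℝ) ^ (1 / s)} ∂P)
        ≤ h (mN N) + h (mN N) := by
    intro N hN
    have hstep1 : ∀ᵐ ω ∂P,
        Pq ω {X | ε < |((occTime X N : ℝ) - (hitTime X N : ℝ))| / (N : ℝ) ^ (1 / s)}
          ≤ Pq ω (Em (mN N)) + Pq (shiftE (N:ℤ) ω) (Em (mN N)) := by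
      filter_upwards [hgood] with ω hg
      exact key_bound hg ε hε s N hN
    calc ∫⁻ ω, Pq ω {X | ε < |((occTime X N : ℝ) - (hitTime X N : ℝ))| / (N : ℝ) ^ (1 / s)} ∂P
        ≤ ∫⁻ ω, (Pq ω (Em (mN N)) + Pq (shiftE (N:ℤ) ω) (Em (mN N))) ∂P :=
          lintegral_mono_ae hstep1
      _ = (∫⁻ ω, Pq ω (Em (mN N)) ∂P) + ∫⁻ ω, Pq (shiftE (N:ℤ) ω) (Em (mN N)) ∂P :=
          lintegral_add_left (hmeasEm _) _
      _ = h (mN N) + h (mN N) := by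
          congr 1
          exact lintegral_shift hEnv (N:ℤ) (hmeasEm (mN N))
  have hupper : Tendsto (fun N => h (mN N) + h (mN N)) atTop (𝓝 0) := by
    have h1 := hhtend.comp hmNtend
    have h2 := h1.add h1
    simpa using h2
  refine tendsto_of_tendsto_of_tendsto_of_le_of_le' tendsto_const_nhds hupper ?_ ?_
  · exact Filter.Eventually.of_forall fun N => zero_le
  · filter_upwards [Filter.eventually_ge_atTop 1] with N hN
    exact hFbound N hN

end RWRE
end
end

section
/- For the three-state absorbing Markov chain with occupation totals η̄, η̿ of states 1, 2: (a) if U_1 ≥ 1 + c and V_2 ≥ 1 + c for some c > 0, then Corr(η̄, η̿ | Y_0 = 1) ≤ Const · q̿/ε = Const · q̿ V_1; (b) if q̿ ≥ c and q̄ ≥ c for some c > 0, then for ε small enough (equivalently U_1 large enough) Corr(η̄, η̿ | Y_0 = 1) ≥ 1 − ε/c and Corr(η̄, η̿ | Y_0 = 1) ≥ 1 − 1/(c U_1). -/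
open MeasureTheory ProbabilityTheory Filter Set
open scoped ENNReal NNReal Topology Classical

noncomputable section

namespace MC3

/-- Covariance of two real random variables. -/
def mCov {α : Type*} [MeasurableSpace α] (μ : Measure α) (f g : α → ℝ) : ℝ :=
  ∫ x, f x * g x ∂μ - (∫ x, f x ∂μ) * (∫ x, g x ∂μ)

/-- Correlation coefficient of two real random variables. -/
def mCorr {α : Type*} [MeasurableSpace α] (μ : Measure α) (f g : α → ℝ) : ℝ :=
  mCov μ f g / (Real.sqrt (mCov μ f f) * Real.sqrt (mCov μ g g))

/-- The transition matrix of the three state chain with rows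
`(p̄, q̄, 0)`, `(q̿, p̿, ε)`, `(0, 0, 1)`. -/
def mcMatrix (pb qb qq pp e : ℝ) : Fin 3 → Fin 3 → ℝ :=
  ![![pb, qb, 0], ![qq, pp, e], ![0, 0, 1]]

/-- `μ` is the law of the three-state Markov chain with transition matrix
`mcMatrix pb qb qq pp e` started at the state `i`. -/
structure IsMCLaw (pb qb qq pp e : ℝ) (i : Fin 3) (μ : Measure (ℕ → Fin 3)) : Prop where
  prob : IsProbabilityMeasure μ
  start : μ {Y | Y 0 = i} = 1
  step : ∀ (n : ℕ) (y : ℕ → Fin 3) (j : Fin 3),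
    μ {Y | (∀ k ≤ n, Y k = y k) ∧ Y (n+1) = j}
      = ENNReal.ofReal (mcMatrix pb qb qq pp e (y n) j) * μ {Y | ∀ k ≤ n, Y k = y k}

/-- `η̄`: the total number of visits to the state `1` (here `0 : Fin 3`). -/
def etaA (Y : ℕ → Fin 3) : ℝ := (Set.ncard {t : ℕ | Y t = 0} : ℝ)

/-- `η̿`: the total number of visits to the state `2` (here `1 : Fin 3`). -/
def etaB (Y : ℕ → Fin 3) : ℝ := (Set.ncard {t : ℕ | Y t = 1} : ℝ)

structure Par (pb qb qq pp e : ℝ) : Prop where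
  hpb : 0 ≤ pb
  hqb : 0 < qb
  hqq : 0 ≤ qq
  hpp : 0 ≤ pp
  he : 0 < e
  h1 : pb + qb = 1
  h2 : qq + pp + e = 1

variable {pb qb qq pp e : ℝ}

lemma Par.P_nonneg (hP : Par pb qb qq pp e) : ∀ a b, 0 ≤ mcMatrix pb qb qq pp e a b := by
  intro a b
  fin_cases a <;> fin_cases b <;>
    simp [mcMatrix] <;>
    first
      | exact hP.hpb
      | exact hP.hqb.le
      | exact hP.hqq
      | exact hP.hpp
      | exact hP.he.le

def Pm (pb qb qq pp e : ℝ) : ℕ → Fin 3 → Fin 3 → ℝ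
  | 0 => fun a b => if a = b then 1 else 0
  | (m+1) => fun a b => ∑ k : Fin 3, Pm pb qb qq pp e m a k * mcMatrix pb qb qq pp e k b

lemma Pm_zero (a b : Fin 3) : Pm pb qb qq pp e 0 a b = if a = b then 1 else 0 := rfl

lemma Pm_succ (m : ℕ) (a b : Fin 3) :
    Pm pb qb qq pp e (m+1) a b = ∑ k : Fin 3, Pm pb qb qq pp e m a k * mcMatrix pb qb qq pp e k b := rfl

lemma Pm_nonneg (hP : Par pb qb qq pp e) (m : ℕ) (a b : Fin 3) :
    0 ≤ Pm pb qb qq pp e m a b := by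
  induction m generalizing a b with
  | zero => rw [Pm_zero]; positivity
  | succ m ih =>
    rw [Pm_succ]
    exact Finset.sum_nonneg fun k _ => mul_nonneg (ih a k) (hP.P_nonneg k b)

lemma Pm_succ0 (m : ℕ) (a : Fin 3) :
    Pm pb qb qq pp e (m+1) a 0 = Pm pb qb qq pp e m a 0 * pb + Pm pb qb qq pp e m a 1 * qq := by
  rw [Pm_succ, Fin.sum_univ_three]
  simp [mcMatrix]

lemma Pm_succ1 (m : ℕ) (a : Fin 3) :
    Pm pb qb qq pp e (m+1) a 1 = Pm pb qb qq pp e m a 0 * qb + Pm pb qb qq pp e m a 1 * pp := by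
  rw [Pm_succ, Fin.sum_univ_three]
  simp [mcMatrix]

/-- survival weight -/
lemma Pm_decay (hP : Par pb qb qq pp e) (a : Fin 3) (m : ℕ) :
    Pm pb qb qq pp e m a 0 + Pm pb qb qq pp e m a 1 ≤ (1 - e*qb)^(m/2) := by
  have hqb1 : qb ≤ 1 := by nlinarith [hP.hpb, hP.h1]
  have he1 : e ≤ 1 := by nlinarith [hP.hqq, hP.hpp, hP.h2]
  have hr0 : 0 ≤ 1 - e*qb := by nlinarith [hP.he.le, hP.hqb.le]
  induction m using Nat.strong_induction_on with
  | _ m ih =>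
    match m with
    | 0 => fin_cases a <;> norm_num [Pm_zero, Fin.ext_iff]
    | 1 =>
      have h0 := Pm_nonneg hP 0 a 0
      have h1 := Pm_nonneg hP 0 a 1
      rw [Pm_succ0, Pm_succ1]
      have hbase : Pm pb qb qq pp e 0 a 0 + Pm pb qb qq pp e 0 a 1 ≤ 1 := by
        fin_cases a <;> norm_num [Pm_zero, Fin.ext_iff]
      norm_num
      nlinarith [hP.hpb, hP.hqb.le, hP.hqq, hP.hpp, hP.he.le, hP.h1, hP.h2]
    | (m+2) =>
      have hm := ih m (by omega)
      have h0 := Pm_nonneg hP m a 0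
      have h1 := Pm_nonneg hP m a 1
      have key : Pm pb qb qq pp e (m+2) a 0 + Pm pb qb qq pp e (m+2) a 1
          ≤ (1 - e*qb) * (Pm pb qb qq pp e m a 0 + Pm pb qb qq pp e m a 1) := by
        have e00 : Pm pb qb qq pp e (m+2) a 0
            = Pm pb qb qq pp e (m+1) a 0 * pb + Pm pb qb qq pp e (m+1) a 1 * qq := Pm_succ0 (m+1) a
        have e01 : Pm pb qb qq pp e (m+2) a 1
            = Pm pb qb qq pp e (m+1) a 0 * qb + Pm pb qb qq pp e (m+1) a 1 * pp := Pm_succ1 (m+1) a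
        have hpb' : pb = 1 - qb := by linarith [hP.h1]
        have hpp' : pp = 1 - qq - e := by linarith [hP.h2]
        have h2' : (0:ℝ) ≤ 2 - qb - qq - e := by nlinarith [hP.hpp, hP.he.le]
        subst hpb'
        subst hpp'
        rw [e00, e01, Pm_succ0, Pm_succ1]
        nlinarith [mul_nonneg (mul_nonneg h1 hP.he.le) h2']
      have hpow : (1 - e*qb) * (1 - e*qb)^(m/2) = (1 - e*qb)^((m+2)/2) := by
        rw [← pow_succ']
        congr 1
        omega
      calc Pm pb qb qq pp e (m+2) a 0 + Pm pb qb qq pp e (m+2) a 1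
          ≤ (1 - e*qb) * (Pm pb qb qq pp e m a 0 + Pm pb qb qq pp e m a 1) := key
        _ ≤ (1 - e*qb) * (1 - e*qb)^(m/2) := by
            apply mul_le_mul_of_nonneg_left hm hr0
        _ = (1 - e*qb)^((m+2)/2) := hpow


/-- total ENNReal visit sums -/
def TT (pb qb qq pp e : ℝ) (a b : Fin 3) : ℝ≥0∞ := ∑' m, ENNReal.ofReal (Pm pb qb qq pp e m a b)

def TT' (pb qb qq pp e : ℝ) (a b : Fin 3) : ℝ≥0∞ := ∑' m, ENNReal.ofReal (Pm pb qb qq pp e (m+1) a b)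

lemma TT_eq (a b : Fin 3) : TT pb qb qq pp e a b
    = ENNReal.ofReal (Pm pb qb qq pp e 0 a b) + TT' pb qb qq pp e a b :=
  tsum_eq_zero_add' ENNReal.summable

lemma geom_ne_top (hP : Par pb qb qq pp e) :
    ∑' m : ℕ, ENNReal.ofReal ((1 - e*qb)^(m/2)) ≠ ⊤ := by
  have hqb1 : qb ≤ 1 := by nlinarith [hP.hpb, hP.h1]
  have he1 : e ≤ 1 := by nlinarith [hP.hqq, hP.hpp, hP.h2]
  have hr0 : 0 ≤ 1 - e*qb := by nlinarith [hP.he.le, hP.hqb.le]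
  set x : ℝ≥0∞ := ENNReal.ofReal (1 - e*qb) with hx
  have hofr : ∀ m : ℕ, ENNReal.ofReal ((1 - e*qb)^(m/2)) = x^(m/2) := fun m =>
    ENNReal.ofReal_pow hr0 _
  have hlt : x < 1 := by
    rw [hx, ← ENNReal.ofReal_one]
    exact ENNReal.ofReal_lt_ofReal_iff_of_nonneg hr0 |>.mpr
      (by nlinarith [hP.he, hP.hqb])
  have hsplit : ∑' m : ℕ, x^(m/2) = (∑' k : ℕ, x^k) + ∑' k : ℕ, x^k := by
    rw [← tsum_even_add_odd (f := fun m => x^(m/2)) ENNReal.summable ENNReal.summable]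
    congr 1 <;> · apply tsum_congr; intro k; congr 1; omega
  have hgeom : (∑' k : ℕ, x^k) ≠ ⊤ := by
    rw [ENNReal.tsum_geometric]
    intro h
    rw [ENNReal.inv_eq_top] at h
    exact absurd (tsub_eq_zero_iff_le.mp h) hlt.not_ge
  calc (∑' m : ℕ, ENNReal.ofReal ((1 - e*qb)^(m/2))) = ∑' m : ℕ, x^(m/2) := tsum_congr hofr
    _ = _ := hsplit
    _ ≠ ⊤ := ENNReal.add_ne_top.mpr ⟨hgeom, hgeom⟩

lemma TT_ne_top (hP : Par pb qb qq pp e) (a b : Fin 3) (hb : b = 0 ∨ b = 1) :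
    TT pb qb qq pp e a b ≠ ⊤ := by
  refine ne_top_of_le_ne_top (geom_ne_top hP) (Summable.tsum_le_tsum (fun m => ?_)
    ENNReal.summable ENNReal.summable)
  apply ENNReal.ofReal_le_ofReal
  have h0 := Pm_nonneg hP m a 0
  have h1 := Pm_nonneg hP m a 1
  have := Pm_decay hP a m
  rcases hb with rfl | rfl <;> linarith

lemma TT'_ne_top (hP : Par pb qb qq pp e) (a b : Fin 3) (hb : b = 0 ∨ b = 1) :
    TT' pb qb qq pp e a b ≠ ⊤ := by
  have := TT_ne_top hP a b hb
  rw [TT_eq] at this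
  exact fun h => this (by simp [h])

lemma TT'_eq0 (hP : Par pb qb qq pp e) (a : Fin 3) :
    TT' pb qb qq pp e a 0
      = TT pb qb qq pp e a 0 * ENNReal.ofReal pb + TT pb qb qq pp e a 1 * ENNReal.ofReal qq := by
  unfold TT' TT
  rw [← ENNReal.tsum_mul_right, ← ENNReal.tsum_mul_right, ← ENNReal.tsum_add]
  apply tsum_congr; intro m
  rw [Pm_succ0, ENNReal.ofReal_add (mul_nonneg (Pm_nonneg hP m a 0) hP.hpb)
    (mul_nonneg (Pm_nonneg hP m a 1) hP.hqq),
    ENNReal.ofReal_mul (Pm_nonneg hP m a 0), ENNReal.ofReal_mul (Pm_nonneg hP m a 1)]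

lemma TT'_eq1 (hP : Par pb qb qq pp e) (a : Fin 3) :
    TT' pb qb qq pp e a 1
      = TT pb qb qq pp e a 0 * ENNReal.ofReal qb + TT pb qb qq pp e a 1 * ENNReal.ofReal pp := by
  unfold TT' TT
  rw [← ENNReal.tsum_mul_right, ← ENNReal.tsum_mul_right, ← ENNReal.tsum_add]
  apply tsum_congr; intro m
  rw [Pm_succ1, ENNReal.ofReal_add (mul_nonneg (Pm_nonneg hP m a 0) hP.hqb.le)
    (mul_nonneg (Pm_nonneg hP m a 1) hP.hpp),
    ENNReal.ofReal_mul (Pm_nonneg hP m a 0), ENNReal.ofReal_mul (Pm_nonneg hP m a 1)]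

/-- real-valued visit sums -/
def tt (pb qb qq pp e : ℝ) (a b : Fin 3) : ℝ := (TT pb qb qq pp e a b).toReal

lemma tt_nonneg (a b : Fin 3) : 0 ≤ tt pb qb qq pp e a b := ENNReal.toReal_nonneg

lemma tt_eqs (hP : Par pb qb qq pp e) (a : Fin 3) :
    tt pb qb qq pp e a 0 = (if a = 0 then 1 else 0)
        + tt pb qb qq pp e a 0 * pb + tt pb qb qq pp e a 1 * qq
    ∧ tt pb qb qq pp e a 1 = (if a = 1 then 1 else 0)
        + tt pb qb qq pp e a 0 * qb + tt pb qb qq pp e a 1 * pp := by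
  have h0 := TT_ne_top hP a 0 (Or.inl rfl)
  have h1 := TT_ne_top hP a 1 (Or.inr rfl)
  constructor
  · have := TT_eq (pb := pb) (qb := qb) (qq := qq) (pp := pp) (e := e) (a := a) (b := 0)
    rw [TT'_eq0 hP] at this
    have := congrArg ENNReal.toReal this
    rw [ENNReal.toReal_add (by simp) (by
        simp only [ne_eq, ENNReal.add_eq_top, not_or]
        exact ⟨ENNReal.mul_ne_top h0 (by simp), ENNReal.mul_ne_top h1 (by simp)⟩),
      ENNReal.toReal_add (ENNReal.mul_ne_top h0 (by simp)) (ENNReal.mul_ne_top h1 (by simp)),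
      ENNReal.toReal_mul, ENNReal.toReal_mul, ENNReal.toReal_ofReal hP.hpb,
      ENNReal.toReal_ofReal hP.hqq, ENNReal.toReal_ofReal (Pm_nonneg hP 0 a 0)] at this
    unfold tt
    rw [Pm_zero] at this
    by_cases ha : a = 0
    · rw [if_pos ha] at this; rw [if_pos ha]; linarith
    · rw [if_neg ha] at this; rw [if_neg ha]; linarith
  · have := TT_eq (pb := pb) (qb := qb) (qq := qq) (pp := pp) (e := e) (a := a) (b := 1)
    rw [TT'_eq1 hP] at this
    have := congrArg ENNReal.toReal this
    rw [ENNReal.toReal_add (by simp) (by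
        simp only [ne_eq, ENNReal.add_eq_top, not_or]
        exact ⟨ENNReal.mul_ne_top h0 (by simp), ENNReal.mul_ne_top h1 (by simp)⟩),
      ENNReal.toReal_add (ENNReal.mul_ne_top h0 (by simp)) (ENNReal.mul_ne_top h1 (by simp)),
      ENNReal.toReal_mul, ENNReal.toReal_mul, ENNReal.toReal_ofReal hP.hqb.le,
      ENNReal.toReal_ofReal hP.hpp, ENNReal.toReal_ofReal (Pm_nonneg hP 0 a 1)] at this
    unfold tt
    rw [Pm_zero] at this
    by_cases ha : a = 1
    · rw [if_pos ha] at this; rw [if_pos ha]; linarith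
    · rw [if_neg ha] at this; rw [if_neg ha]; linarith

lemma tt_vals (hP : Par pb qb qq pp e) :
    tt pb qb qq pp e 0 0 = (qq+e)/(qb*e) ∧ tt pb qb qq pp e 0 1 = 1/e
    ∧ tt pb qb qq pp e 1 0 = qq/(qb*e) ∧ tt pb qb qq pp e 1 1 = 1/e := by
  obtain ⟨e00, e01⟩ := tt_eqs hP 0
  obtain ⟨e10, e11⟩ := tt_eqs hP 1
  norm_num at e00 e01 e10 e11
  have hqb := hP.hqb
  have he := hP.he
  have hpb' : pb = 1 - qb := by linarith [hP.h1]
  have hpp' : pp = 1 - qq - e := by linarith [hP.h2]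
  subst hpb'; subst hpp'
  set u0 := tt (1-qb) qb qq (1-qq-e) e 0 0
  set v0 := tt (1-qb) qb qq (1-qq-e) e 0 1
  set u1 := tt (1-qb) qb qq (1-qq-e) e 1 0
  set v1 := tt (1-qb) qb qq (1-qq-e) e 1 1
  have hv0 : v0 = 1/e := by
    rw [eq_div_iff (ne_of_gt he)]
    linear_combination e00 + e01
  have hv0' : v0 * e = 1 := by rw [hv0]; field_simp
  have hu0 : u0 = (qq+e)/(qb*e) := by
    rw [eq_div_iff (by positivity)]
    linear_combination e * e00 + qq * hv0'
  have hv1 : v1 = 1/e := by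
    rw [eq_div_iff (ne_of_gt he)]
    linear_combination e10 + e11
  have hv1' : v1 * e = 1 := by rw [hv1]; field_simp
  have hu1 : u1 = qq/(qb*e) := by
    rw [eq_div_iff (by positivity)]
    linear_combination e * e10 + qq * hv1'
  exact ⟨hu0, hv0, hu1, hv1⟩


/-! ### The law of the chain -/

def cylSet (n : ℕ) (y : ℕ → Fin 3) : Set (ℕ → Fin 3) := {Y | ∀ k ≤ n, Y k = y k}

lemma meas_coord (k : ℕ) (c : Fin 3) : MeasurableSet {Y : ℕ → Fin 3 | Y k = c} := by
  have : {Y : ℕ → Fin 3 | Y k = c} = (fun Y : ℕ → Fin 3 => Y k) ⁻¹' {c} := rfl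
  rw [this]
  exact measurable_pi_apply k (measurableSet_singleton c)

lemma measurable_cylSet (n : ℕ) (y : ℕ → Fin 3) : MeasurableSet (cylSet n y) := by
  have : cylSet n y = ⋂ k ∈ Finset.range (n+1), {Y : ℕ → Fin 3 | Y k = y k} := by
    ext Y; simp [cylSet, Nat.lt_succ_iff]
  rw [this]
  exact Finset.measurableSet_biInter _ fun k _ => meas_coord k (y k)

def extw (n : ℕ) (w : Fin (n+1) → Fin 3) : ℕ → Fin 3 :=
  fun k => w ⟨min k n, Nat.lt_succ_of_le (min_le_right _ _)⟩

lemma extw_eq {n k : ℕ} (hk : k ≤ n) (w : Fin (n+1) → Fin 3) :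
    extw n w k = w ⟨k, Nat.lt_succ_of_le hk⟩ := by
  unfold extw
  congr 1
  exact Fin.ext (by simp [min_eq_left hk])

lemma ite_irrel {α : Sort*} (P : Prop) (h1 h2 : Decidable P) (x y : α) :
    @ite α P h1 x y = @ite α P h2 x y := by
  congr

lemma cyl_disj {n : ℕ} {w w' : Fin (n+1) → Fin 3} (hne : w ≠ w') :
    Disjoint (cylSet n (extw n w)) (cylSet n (extw n w')) := by
  rw [Set.disjoint_left]
  intro Y hY hY'
  obtain ⟨j, hj⟩ := Function.ne_iff.mp hne
  have hj1 : (j : ℕ) ≤ n := Nat.lt_succ_iff.mp j.isLt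
  have e1 := hY j hj1
  have e2 := hY' j hj1
  rw [extw_eq hj1] at e1 e2
  simp only [Fin.eta] at e1 e2
  exact hj (e1 ▸ e2 ▸ rfl)

lemma decomp (μ : Measure (ℕ → Fin 3)) (n : ℕ) (F : (ℕ → Fin 3) → Prop)
    (hF : ∀ Y Z : ℕ → Fin 3, (∀ k ≤ n, Y k = Z k) → (F Y ↔ F Z)) :
    μ {Y | F Y} = ∑ w : Fin (n+1) → Fin 3,
      if F (extw n w) then μ (cylSet n (extw n w)) else 0 := by
  classical
  have hset : {Y | F Y} = ⋃ w ∈ Finset.univ.filter (fun w : Fin (n+1) → Fin 3 => F (extw n w)),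
      cylSet n (extw n w) := by
    ext Y
    simp only [Set.mem_setOf_eq, Set.mem_iUnion, Finset.mem_filter, Finset.mem_univ, true_and]
    constructor
    · intro hY
      refine ⟨fun k => Y k, ?_, ?_⟩
      · exact (hF Y (extw n fun k => Y (k : ℕ)) (fun k hk => by rw [extw_eq hk])).mp hY
      · intro k hk; rw [extw_eq hk]
    · rintro ⟨w, hw, hY⟩
      exact (hF (extw n w) Y (fun k hk => (hY k hk).symm)).mp hw
  rw [hset, measure_biUnion_finset
    (fun w _ w' _ hne => cyl_disj hne)
    (fun w _ => measurable_cylSet n (extw n w)), Finset.sum_filter]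

lemma measurable_F (n : ℕ) (F : (ℕ → Fin 3) → Prop)
    (hF : ∀ Y Z : ℕ → Fin 3, (∀ k ≤ n, Y k = Z k) → (F Y ↔ F Z)) :
    MeasurableSet {Y | F Y} := by
  classical
  have hset : {Y | F Y} = ⋃ w ∈ Finset.univ.filter (fun w : Fin (n+1) → Fin 3 => F (extw n w)),
      cylSet n (extw n w) := by
    ext Y
    simp only [Set.mem_setOf_eq, Set.mem_iUnion, Finset.mem_filter, Finset.mem_univ, true_and]
    constructor
    · intro hY
      refine ⟨fun k => Y k, ?_, ?_⟩
      · exact (hF Y (extw n fun k => Y (k : ℕ)) (fun k hk => by rw [extw_eq hk])).mp hY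
      · intro k hk; rw [extw_eq hk]
    · rintro ⟨w, hw, hY⟩
      exact (hF (extw n w) Y (fun k hk => (hY k hk).symm)).mp hw
  rw [hset]
  exact Finset.measurableSet_biUnion _ fun w _ => measurable_cylSet n (extw n w)

variable {i : Fin 3} {μ : Measure (ℕ → Fin 3)}

lemma onestep (hμ : IsMCLaw pb qb qq pp e i μ) (n : ℕ) (F : (ℕ → Fin 3) → Prop)
    (hF : ∀ Y Z : ℕ → Fin 3, (∀ k ≤ n, Y k = Z k) → (F Y ↔ F Z)) (j : Fin 3) :
    μ {Y | F Y ∧ Y (n+1) = j}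
      = ∑ k : Fin 3, ENNReal.ofReal (mcMatrix pb qb qq pp e k j) * μ {Y | F Y ∧ Y n = k} := by
  classical
  have hset : {Y | F Y ∧ Y (n+1) = j}
      = ⋃ w ∈ Finset.univ.filter (fun w : Fin (n+1) → Fin 3 => F (extw n w)),
        {Y | (∀ k ≤ n, Y k = extw n w k) ∧ Y (n+1) = j} := by
    ext Y
    simp only [Set.mem_setOf_eq, Set.mem_iUnion, Finset.mem_filter, Finset.mem_univ, true_and]
    constructor
    · rintro ⟨hY, hYj⟩
      refine ⟨fun k => Y k, ?_, ?_, hYj⟩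
      · exact (hF Y (extw n fun k => Y (k : ℕ)) (fun k hk => by rw [extw_eq hk])).mp hY
      · intro k hk; rw [extw_eq hk]
    · rintro ⟨w, hw, hY, hYj⟩
      exact ⟨(hF (extw n w) Y (fun k hk => (hY k hk).symm)).mp hw, hYj⟩
  have hdisj : ∀ w ∈ Finset.univ.filter (fun w : Fin (n+1) → Fin 3 => F (extw n w)),
      ∀ w' ∈ Finset.univ.filter (fun w : Fin (n+1) → Fin 3 => F (extw n w)), w ≠ w' →
      Disjoint {Y : ℕ → Fin 3 | (∀ k ≤ n, Y k = extw n w k) ∧ Y (n+1) = j}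
        {Y : ℕ → Fin 3 | (∀ k ≤ n, Y k = extw n w' k) ∧ Y (n+1) = j} := by
    intro w _ w' _ hne
    have := cyl_disj (n := n) hne
    rw [Set.disjoint_left] at this ⊢
    intro Y hY hY'
    exact this hY.1 hY'.1
  have hmeas : ∀ w : Fin (n+1) → Fin 3,
      MeasurableSet {Y : ℕ → Fin 3 | (∀ k ≤ n, Y k = extw n w k) ∧ Y (n+1) = j} := by
    intro w
    have : {Y : ℕ → Fin 3 | (∀ k ≤ n, Y k = extw n w k) ∧ Y (n+1) = j}
        = cylSet n (extw n w) ∩ {Y | Y (n+1) = j} := rfl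
    rw [this]
    exact (measurable_cylSet n (extw n w)).inter (meas_coord (n+1) j)
  have hdec : ∀ k : Fin 3, μ {Y | F Y ∧ Y n = k} = ∑ w : Fin (n+1) → Fin 3,
      if F (extw n w) ∧ extw n w n = k then μ (cylSet n (extw n w)) else 0 := by
    intro k
    rw [decomp μ n (fun Y => F Y ∧ Y n = k) (fun Y Z h =>
      and_congr (hF Y Z h) (by rw [show Y n = Z n from h n le_rfl]))]
    exact Finset.sum_congr rfl fun w _ => ite_irrel _ _ _ _ _
  rw [hset, measure_biUnion_finset (fun w hw w' hw' hne => hdisj w hw w' hw' hne)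
    (fun w _ => hmeas w)]
  have hterm : ∀ w ∈ Finset.univ.filter (fun w : Fin (n+1) → Fin 3 => F (extw n w)),
      μ {Y | (∀ k ≤ n, Y k = extw n w k) ∧ Y (n+1) = j}
        = ENNReal.ofReal (mcMatrix pb qb qq pp e (extw n w n) j) * μ (cylSet n (extw n w)) :=
    fun w _ => hμ.step n (extw n w) j
  rw [Finset.sum_congr rfl hterm, Finset.sum_filter]
  symm
  calc ∑ k : Fin 3, ENNReal.ofReal (mcMatrix pb qb qq pp e k j) * μ {Y | F Y ∧ Y n = k}
      = ∑ k : Fin 3, ∑ w : Fin (n+1) → Fin 3, ENNReal.ofReal (mcMatrix pb qb qq pp e k j) *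
          (if F (extw n w) ∧ extw n w n = k then μ (cylSet n (extw n w)) else 0) :=
        Finset.sum_congr rfl fun k _ => by rw [hdec k, Finset.mul_sum]
    _ = ∑ w : Fin (n+1) → Fin 3, ∑ k : Fin 3, ENNReal.ofReal (mcMatrix pb qb qq pp e k j) *
          (if F (extw n w) ∧ extw n w n = k then μ (cylSet n (extw n w)) else 0) :=
        Finset.sum_comm
    _ = ∑ w : Fin (n+1) → Fin 3, (if F (extw n w) then
          ENNReal.ofReal (mcMatrix pb qb qq pp e (extw n w n) j) * μ (cylSet n (extw n w))
          else 0) := by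
        apply Finset.sum_congr rfl
        intro w _
        by_cases hFw : F (extw n w)
        · rw [if_pos hFw]
          rw [show (∑ k : Fin 3, ENNReal.ofReal (mcMatrix pb qb qq pp e k j) *
              (if F (extw n w) ∧ extw n w n = k then μ (cylSet n (extw n w)) else 0))
            = ∑ k : Fin 3, if extw n w n = k then
                ENNReal.ofReal (mcMatrix pb qb qq pp e k j) * μ (cylSet n (extw n w)) else 0 from
            Finset.sum_congr rfl fun k _ => by
              by_cases hk : extw n w n = k
              · rw [if_pos hk, if_pos ⟨hFw, hk⟩]
              · rw [if_neg hk, if_neg (fun h => hk h.2), mul_zero]]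
          rw [Finset.sum_ite_eq Finset.univ (extw n w n)
            (fun k => ENNReal.ofReal (mcMatrix pb qb qq pp e k j) * μ (cylSet n (extw n w)))]
          rw [if_pos (Finset.mem_univ _)]
        · rw [if_neg hFw]
          apply Finset.sum_eq_zero fun k _ => ?_
          rw [if_neg (fun h => hFw h.1), mul_zero]

lemma marg (hP : Par pb qb qq pp e) (hμ : IsMCLaw pb qb qq pp e i μ) (t : ℕ) (b : Fin 3) :
    μ {Y | Y t = b} = ENNReal.ofReal (Pm pb qb qq pp e t i b) := by
  haveI := hμ.prob
  induction t generalizing b with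
  | zero =>
    by_cases hb : b = i
    · subst hb
      rw [hμ.start, Pm_zero, if_pos rfl, ENNReal.ofReal_one]
    · have hsub : {Y : ℕ → Fin 3 | Y 0 = b} ⊆ {Y : ℕ → Fin 3 | Y 0 = i}ᶜ := by
        intro Y hY hY'
        have h1 : Y 0 = b := hY
        have h2 : Y 0 = i := hY'
        exact hb (by rw [← h1, h2])
      have hc : μ ({Y : ℕ → Fin 3 | Y 0 = i}ᶜ) = 0 := by
        rw [measure_compl (meas_coord 0 i) (measure_ne_top μ _), hμ.start, measure_univ,
          tsub_self]
      have : μ {Y : ℕ → Fin 3 | Y 0 = b} = 0 :=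
        le_antisymm (hc ▸ measure_mono hsub) zero_le
      rw [this, Pm_zero, if_neg (fun h => hb h.symm), ENNReal.ofReal_zero]
  | succ t ih =>
    have h1 := onestep hμ t (fun _ => True) (fun _ _ _ => Iff.rfl) b
    have hsets : ∀ (s : ℕ) (c : Fin 3), {Y : ℕ → Fin 3 | True ∧ Y s = c} = {Y | Y s = c} := by
      intro s c; ext Y; simp
    rw [hsets (t+1) b] at h1
    rw [h1]
    have hterm : ∀ k : Fin 3, ENNReal.ofReal (mcMatrix pb qb qq pp e k b) * μ {Y | True ∧ Y t = k}
        = ENNReal.ofReal (Pm pb qb qq pp e t i k * mcMatrix pb qb qq pp e k b) := by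
      intro k
      rw [hsets t k, ih k, mul_comm, ← ENNReal.ofReal_mul (Pm_nonneg hP t i k)]
    rw [Finset.sum_congr rfl (fun k _ => hterm k),
      ← ENNReal.ofReal_sum_of_nonneg (fun k _ =>
        mul_nonneg (Pm_nonneg hP t i k) (hP.P_nonneg k b)), ← Pm_succ]

lemma pairprob (hP : Par pb qb qq pp e) (hμ : IsMCLaw pb qb qq pp e i μ) (s m : ℕ)
    (a b : Fin 3) :
    μ {Y | Y s = a ∧ Y (s+m) = b}
      = ENNReal.ofReal (Pm pb qb qq pp e s i a * Pm pb qb qq pp e m a b) := by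
  induction m generalizing b with
  | zero =>
    by_cases hab : a = b
    · subst hab
      have : {Y : ℕ → Fin 3 | Y s = a ∧ Y (s+0) = a} = {Y | Y s = a} := by
        ext Y; simp
      rw [this, marg hP hμ s a, Pm_zero, if_pos rfl, mul_one]
    · have : {Y : ℕ → Fin 3 | Y s = a ∧ Y (s+0) = b} = ∅ := by
        ext Y
        simp only [Nat.add_zero, Set.mem_setOf_eq, Set.mem_empty_iff_false, iff_false, not_and]
        intro h1 h2
        exact hab (h1 ▸ h2 ▸ rfl)
      rw [this, measure_empty, Pm_zero, if_neg hab, mul_zero, ENNReal.ofReal_zero]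
  | succ m ih =>
    have h1 := onestep hμ (s+m) (fun Y => Y s = a)
      (fun Y Z h => by
        show Y s = a ↔ Z s = a
        rw [h s (Nat.le_add_right s m)]) b
    have hidx : s + (m+1) = (s+m) + 1 := rfl
    rw [hidx, h1]
    have hterm : ∀ k : Fin 3,
        ENNReal.ofReal (mcMatrix pb qb qq pp e k b) * μ {Y | Y s = a ∧ Y (s+m) = k}
        = ENNReal.ofReal (Pm pb qb qq pp e s i a * (Pm pb qb qq pp e m a k * mcMatrix pb qb qq pp e k b)) := by
      intro k
      rw [ih k, mul_comm, ← ENNReal.ofReal_mul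
        (mul_nonneg (Pm_nonneg hP s i a) (Pm_nonneg hP m a k))]
      ring_nf
    rw [Finset.sum_congr rfl (fun k _ => hterm k),
      ← ENNReal.ofReal_sum_of_nonneg (fun k _ => mul_nonneg (Pm_nonneg hP s i a)
        (mul_nonneg (Pm_nonneg hP m a k) (hP.P_nonneg k b))),
      ← Finset.mul_sum, ← Pm_succ]


/-! ### occupation functionals -/

def etaE (a : Fin 3) (Y : ℕ → Fin 3) : ℝ≥0∞ := ∑' t, if Y t = a then 1 else 0

lemma measurable_ind (t : ℕ) (a : Fin 3) :
    Measurable (fun Y : ℕ → Fin 3 => if Y t = a then (1:ℝ≥0∞) else 0) :=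
  Measurable.ite (meas_coord t a) measurable_const measurable_const

lemma measurable_etaE (a : Fin 3) : Measurable (etaE a) :=
  Measurable.ennreal_tsum fun t => measurable_ind t a

lemma ncard_eq_toReal (a : Fin 3) (Y : ℕ → Fin 3) :
    ((Set.ncard {t : ℕ | Y t = a} : ℕ) : ℝ) = (etaE a Y).toReal := by
  set s : Set ℕ := {t : ℕ | Y t = a} with hs
  have hind : etaE a Y = ∑' t, s.indicator (fun _ => (1:ℝ≥0∞)) t := by
    apply tsum_congr
    intro t
    by_cases h : Y t = a <;> simp [Set.indicator, hs, h]
  by_cases hfin : s.Finite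
  · haveI := hfin.fintype
    rw [hind, ← tsum_subtype s (fun _ => (1:ℝ≥0∞)), tsum_fintype]
    simp only [Finset.sum_const, Finset.card_univ, nsmul_eq_mul, mul_one]
    rw [ENNReal.toReal_natCast, Set.ncard_eq_toFinset_card' s, Set.toFinset_card]
  · have htop : etaE a Y = ⊤ := by
      by_contra hne
      obtain ⟨n, hn⟩ := ENNReal.exists_nat_gt hne
      have hinf : s.Infinite := hfin
      obtain ⟨T, hTs, hTc⟩ := hinf.exists_subset_card_eq n
      have hle : (n : ℝ≥0∞) ≤ etaE a Y := by
        rw [hind]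
        calc (n : ℝ≥0∞) = ∑ t ∈ T, s.indicator (fun _ => (1:ℝ≥0∞)) t := by
              rw [Finset.sum_indicator_eq_sum_filter]
              rw [show T.filter (fun t => t ∈ s) = T from Finset.filter_true_of_mem
                (fun t ht => hTs ht)]
              simp [hTc]
          _ ≤ _ := ENNReal.sum_le_tsum T
      exact absurd hn (not_lt.mpr hle)
    have hinf : s.Infinite := hfin
    rw [htop, hinf.ncard]
    simp

lemma etaA_eq (Y : ℕ → Fin 3) : etaA Y = (etaE 0 Y).toReal := ncard_eq_toReal 0 Y
lemma etaB_eq (Y : ℕ → Fin 3) : etaB Y = (etaE 1 Y).toReal := ncard_eq_toReal 1 Y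

variable {i : Fin 3} {μ : Measure (ℕ → Fin 3)}

lemma lint_ind (t : ℕ) (a : Fin 3) :
    ∫⁻ Y, (if Y t = a then (1:ℝ≥0∞) else 0) ∂μ = μ {Y | Y t = a} := by
  rw [show (fun Y : ℕ → Fin 3 => if Y t = a then (1:ℝ≥0∞) else 0)
      = Set.indicator {Y : ℕ → Fin 3 | Y t = a} (fun _ => 1) from
    funext fun Y => by by_cases h : Y t = a <;> simp [Set.indicator, h]]
  rw [lintegral_indicator (meas_coord t a), setLIntegral_one]

lemma lint_pair_ind (st : ℕ × ℕ) (a b : Fin 3) :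
    ∫⁻ Y, ((if Y st.1 = a then (1:ℝ≥0∞) else 0) * (if Y st.2 = b then (1:ℝ≥0∞) else 0)) ∂μ
      = μ {Y | Y st.1 = a ∧ Y st.2 = b} := by
  rw [show (fun Y : ℕ → Fin 3 =>
        (if Y st.1 = a then (1:ℝ≥0∞) else 0) * (if Y st.2 = b then (1:ℝ≥0∞) else 0))
      = Set.indicator {Y : ℕ → Fin 3 | Y st.1 = a ∧ Y st.2 = b} (fun _ => 1) from
    funext fun Y => by
      by_cases h1 : Y st.1 = a <;> by_cases h2 : Y st.2 = b <;>
        simp [Set.indicator, h1, h2]]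
  rw [lintegral_indicator ?hm, setLIntegral_one]
  case hm =>
    exact (meas_coord st.1 a).inter (meas_coord st.2 b)

lemma lint_etaE (hP : Par pb qb qq pp e) (hμ : IsMCLaw pb qb qq pp e i μ) (a : Fin 3) :
    ∫⁻ Y, etaE a Y ∂μ = TT pb qb qq pp e i a := by
  unfold etaE
  rw [lintegral_tsum (fun t => (measurable_ind t a).aemeasurable)]
  exact tsum_congr fun t => by rw [lint_ind, marg hP hμ t a]

lemma lint_etaE_mul (hμ : IsMCLaw pb qb qq pp e i μ) (a b : Fin 3) :
    ∫⁻ Y, etaE a Y * etaE b Y ∂μ = ∑' s : ℕ, ∑' t : ℕ, μ {Y | Y s = a ∧ Y t = b} := by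
  have hpt : ∀ Y, etaE a Y * etaE b Y
      = ∑' s : ℕ, ∑' t : ℕ, ((if Y s = a then (1:ℝ≥0∞) else 0) * (if Y t = b then 1 else 0)) := by
    intro Y
    unfold etaE
    rw [← ENNReal.tsum_mul_right]
    exact tsum_congr fun s => by rw [← ENNReal.tsum_mul_left]
  rw [lintegral_congr hpt,
    lintegral_tsum (f := fun s (Y : ℕ → Fin 3) => ∑' t : ℕ, ((if Y s = a then (1:ℝ≥0∞) else 0) *
      (if Y t = b then 1 else 0))) (fun s => (Measurable.ennreal_tsum fun t =>
      ((measurable_ind s a).mul (measurable_ind t b))).aemeasurable)]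
  apply tsum_congr
  intro s
  rw [lintegral_tsum (f := fun t (Y : ℕ → Fin 3) => ((if Y s = a then (1:ℝ≥0∞) else 0) *
      (if Y t = b then 1 else 0))) (fun t => ((measurable_ind s a).mul (measurable_ind t b)).aemeasurable)]
  exact tsum_congr fun t => lint_pair_ind (s, t) a b

/-- triangular reindexing helper -/
lemma tsum_shift (g : ℕ → ℝ≥0∞) (n : ℕ) :
    ∑' s : ℕ, (if n ≤ s then g (s - n) else 0) = ∑' m : ℕ, g m := by
  rw [← Function.Injective.tsum_eq (f := fun s => if n ≤ s then g (s - n) else 0)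
    (g := fun m => n + m) (fun x y h => by simp only [] at h; omega) ?hs]
  · apply tsum_congr
    intro m
    rw [if_pos (Nat.le_add_right n m)]
    congr 1
    omega
  case hs =>
    intro s hs
    simp only [Function.mem_support, ne_eq] at hs
    by_contra hr
    apply hs
    rw [if_neg]
    intro hle
    exact hr ⟨s - n, by simp only []; omega⟩

lemma tsum_tri (g : ℕ → ℕ → ℝ≥0∞) :
    ∑' s : ℕ, ∑ t ∈ Finset.range (s+1), g t s = ∑' t : ℕ, ∑' m : ℕ, g t (t+m) := by
  have h1 : ∀ s : ℕ, ∑ t ∈ Finset.range (s+1), g t s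
      = ∑' t : ℕ, (if t ≤ s then g t s else 0) := by
    intro s
    rw [tsum_eq_sum (s := Finset.range (s+1))
      (fun t ht => if_neg (fun hle => ht (Finset.mem_range.mpr (Nat.lt_succ_of_le hle))))]
    exact Finset.sum_congr rfl fun t ht =>
      (if_pos (Nat.lt_succ_iff.mp (Finset.mem_range.mp ht))).symm
  rw [tsum_congr h1, ENNReal.tsum_comm]
  apply tsum_congr
  intro t
  rw [← tsum_shift (fun m => g t (t+m)) t]
  apply tsum_congr
  intro s
  by_cases h : t ≤ s
  · rw [if_pos h, if_pos h]
    congr 1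
    omega
  · rw [if_neg h, if_neg h]

lemma double_sum (hP : Par pb qb qq pp e) (hμ : IsMCLaw pb qb qq pp e i μ) (a b : Fin 3) :
    (∑' s : ℕ, ∑' t : ℕ, μ {Y | Y s = a ∧ Y t = b})
      = TT pb qb qq pp e i b * TT pb qb qq pp e b a
        + TT pb qb qq pp e i a * TT' pb qb qq pp e a b := by
  have hsplit : ∀ s : ℕ, (∑' t : ℕ, μ {Y | Y s = a ∧ Y t = b})
      = (∑ t ∈ Finset.range (s+1), μ {Y | Y s = a ∧ Y t = b})
        + ENNReal.ofReal (Pm pb qb qq pp e s i a) * TT' pb qb qq pp e a b := by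
    intro s
    rw [← Summable.sum_add_tsum_nat_add' (f := fun t => μ {Y | Y s = a ∧ Y t = b})
      (k := s+1) ENNReal.summable]
    congr 1
    unfold TT'
    rw [← ENNReal.tsum_mul_left]
    apply tsum_congr
    intro m
    have hidx : m + (s+1) = s + (m+1) := by omega
    rw [hidx, pairprob hP hμ s (m+1) a b,
      ENNReal.ofReal_mul (Pm_nonneg hP s i a)]
  rw [tsum_congr hsplit, ENNReal.tsum_add, ENNReal.tsum_mul_right]
  have hTia : (∑' s : ℕ, ENNReal.ofReal (Pm pb qb qq pp e s i a)) = TT pb qb qq pp e i a := rfl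
  rw [hTia]
  congr 1
  have hcomm : ∀ t s : ℕ, μ {Y : ℕ → Fin 3 | Y s = a ∧ Y t = b}
      = μ {Y : ℕ → Fin 3 | Y t = b ∧ Y s = a} := by
    intro t s
    congr 1
    ext Y
    exact and_comm
  rw [tsum_tri (fun t s => μ {Y | Y s = a ∧ Y t = b})]
  calc ∑' t : ℕ, ∑' m : ℕ, μ {Y : ℕ → Fin 3 | Y (t+m) = a ∧ Y t = b}
      = ∑' t : ℕ, ∑' m : ℕ, ENNReal.ofReal (Pm pb qb qq pp e t i b)
          * ENNReal.ofReal (Pm pb qb qq pp e m b a) := by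
        apply tsum_congr; intro t; apply tsum_congr; intro m
        rw [hcomm t (t+m), pairprob hP hμ t m b a,
          ENNReal.ofReal_mul (Pm_nonneg hP t i b)]
    _ = TT pb qb qq pp e i b * TT pb qb qq pp e b a := by
        unfold TT
        rw [← ENNReal.tsum_mul_right]
        exact tsum_congr fun t => ENNReal.tsum_mul_left


/-! ### moments -/

lemma int_eta (hP : Par pb qb qq pp e) (hμ : IsMCLaw pb qb qq pp e i μ) (a : Fin 3)
    (ha : a = 0 ∨ a = 1) :
    ∫ Y, (etaE a Y).toReal ∂μ = tt pb qb qq pp e i a := by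
  rw [integral_toReal (measurable_etaE a).aemeasurable
    (ae_lt_top (measurable_etaE a) (by rw [lint_etaE hP hμ]; exact TT_ne_top hP i a ha))]
  unfold tt
  rw [lint_etaE hP hμ]

lemma DD_ne_top (hP : Par pb qb qq pp e) (a b : Fin 3) (ha : a = 0 ∨ a = 1)
    (hb : b = 0 ∨ b = 1) :
    TT pb qb qq pp e i b * TT pb qb qq pp e b a + TT pb qb qq pp e i a * TT' pb qb qq pp e a b
      ≠ ⊤ :=
  ENNReal.add_ne_top.mpr
    ⟨ENNReal.mul_ne_top (TT_ne_top hP i b hb) (TT_ne_top hP b a ha),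
     ENNReal.mul_ne_top (TT_ne_top hP i a ha) (TT'_ne_top hP a b hb)⟩

lemma int_eta_mul (hP : Par pb qb qq pp e) (hμ : IsMCLaw pb qb qq pp e i μ) (a b : Fin 3)
    (ha : a = 0 ∨ a = 1) (hb : b = 0 ∨ b = 1) :
    ∫ Y, (etaE a Y).toReal * (etaE b Y).toReal ∂μ
      = tt pb qb qq pp e i b * tt pb qb qq pp e b a
        + tt pb qb qq pp e i a * (TT' pb qb qq pp e a b).toReal := by
  have hlt : ∫⁻ Y, etaE a Y * etaE b Y ∂μ ≠ ⊤ := by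
    rw [lint_etaE_mul hμ, double_sum hP hμ]
    exact DD_ne_top hP a b ha hb
  have hkey : ∀ Y, (etaE a Y).toReal * (etaE b Y).toReal = ((etaE a Y) * (etaE b Y)).toReal :=
    fun Y => (ENNReal.toReal_mul).symm
  rw [show (fun Y => (etaE a Y).toReal * (etaE b Y).toReal)
      = fun Y => ((etaE a Y) * (etaE b Y)).toReal from funext hkey]
  rw [integral_toReal (f := fun Y => etaE a Y * etaE b Y) ((measurable_etaE a).mul (measurable_etaE b)).aemeasurable
    (ae_lt_top ((measurable_etaE a).mul (measurable_etaE b)) hlt)]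
  rw [lint_etaE_mul hμ, double_sum hP hμ]
  rw [ENNReal.toReal_add
    (ENNReal.mul_ne_top (TT_ne_top hP i b hb) (TT_ne_top hP b a ha))
    (ENNReal.mul_ne_top (TT_ne_top hP i a ha) (TT'_ne_top hP a b hb)),
    ENNReal.toReal_mul, ENNReal.toReal_mul]
  rfl

lemma tt'_toReal (hP : Par pb qb qq pp e) (a b : Fin 3) (hb : b = 0 ∨ b = 1) :
    (TT' pb qb qq pp e a b).toReal
      = tt pb qb qq pp e a b - (if a = b then 1 else 0) := by
  have h := TT_eq (pb := pb) (qb := qb) (qq := qq) (pp := pp) (e := e) (a := a) (b := b)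
  have h2 := congrArg ENNReal.toReal h
  rw [ENNReal.toReal_add (by simp) (TT'_ne_top hP a b hb),
    ENNReal.toReal_ofReal (Pm_nonneg hP 0 a b)] at h2
  unfold tt
  rw [h2, Pm_zero]
  ring

lemma integral_etaA (hP : Par pb qb qq pp e) (hμ : IsMCLaw pb qb qq pp e i μ) :
    ∫ Y, etaA Y ∂μ = tt pb qb qq pp e i 0 := by
  simp only [etaA_eq]
  exact int_eta hP hμ 0 (Or.inl rfl)

lemma integral_etaB (hP : Par pb qb qq pp e) (hμ : IsMCLaw pb qb qq pp e i μ) :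
    ∫ Y, etaB Y ∂μ = tt pb qb qq pp e i 1 := by
  simp only [etaB_eq]
  exact int_eta hP hμ 1 (Or.inr rfl)

lemma mCov_AB (hP : Par pb qb qq pp e) (hμ : IsMCLaw pb qb qq pp e 0 μ) :
    mCov μ etaA etaB = qq/(qb*e^2) := by
  obtain ⟨h00, h01, h10, h11⟩ := tt_vals hP
  have hqb := hP.hqb
  have he := hP.he
  unfold mCov
  simp only [etaA_eq, etaB_eq]
  rw [int_eta_mul hP hμ 0 1 (Or.inl rfl) (Or.inr rfl), int_eta hP hμ 0 (Or.inl rfl),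
    int_eta hP hμ 1 (Or.inr rfl), tt'_toReal hP 0 1 (Or.inr rfl)]
  rw [h00, h01, h10, if_neg (by decide : ¬(0:Fin 3) = 1)]
  field_simp
  ring

lemma mCov_AA (hP : Par pb qb qq pp e) (hμ : IsMCLaw pb qb qq pp e 0 μ) :
    mCov μ etaA etaA = ((qq+e)/(qb*e))^2 - (qq+e)/(qb*e) := by
  obtain ⟨h00, h01, h10, h11⟩ := tt_vals hP
  unfold mCov
  simp only [etaA_eq]
  rw [int_eta_mul hP hμ 0 0 (Or.inl rfl) (Or.inl rfl), int_eta hP hμ 0 (Or.inl rfl),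
    tt'_toReal hP 0 0 (Or.inl rfl)]
  rw [h00, if_pos rfl]
  ring

lemma mCov_BB (hP : Par pb qb qq pp e) (hμ : IsMCLaw pb qb qq pp e 0 μ) :
    mCov μ etaB etaB = (1/e)^2 - 1/e := by
  obtain ⟨h00, h01, h10, h11⟩ := tt_vals hP
  unfold mCov
  simp only [etaB_eq]
  rw [int_eta_mul hP hμ 1 1 (Or.inr rfl) (Or.inr rfl), int_eta hP hμ 1 (Or.inr rfl),
    tt'_toReal hP 1 1 (Or.inr rfl)]
  rw [h01, h11, if_pos rfl]
  ring

lemma corr_bound_a {c qb qq e U V N : ℝ} (hc : 0 < c) (hqb : 0 < qb) (hqq : 0 ≤ qq) (he : 0 < e)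
    (hU : U = (qq+e)/(qb*e)) (hV : V = 1/e) (hN : N = qq/(qb*e^2))
    (hUc : 1+c ≤ U) (hVc : 1+c ≤ V) :
    N / (Real.sqrt (U^2-U) * Real.sqrt (V^2-V)) ≤ ((1+c)/c) * qq / e := by
  have hU0 : 0 < U := lt_of_lt_of_le (by linarith) hUc
  have hV0 : 0 < V := lt_of_lt_of_le (by linarith) hVc
  have hN0 : 0 ≤ N := by rw [hN]; positivity
  have hcc : 0 < c/(1+c) := by positivity
  have hqqe : 0 < qq + e := by linarith
  set d := Real.sqrt (c/(1+c)) with hd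
  have hd0 : 0 < d := Real.sqrt_pos.mpr hcc
  have hd2 : d^2 = c/(1+c) := Real.sq_sqrt hcc.le
  have hUlow : U^2 * (c/(1+c)) ≤ U^2 - U := by
    have h1 : U * (c/(1+c)) ≤ U - 1 := by
      rw [← mul_div_assoc, div_le_iff₀ (by linarith : (0:ℝ) < 1+c)]
      nlinarith
    nlinarith
  have hVlow : V^2 * (c/(1+c)) ≤ V^2 - V := by
    have h1 : V * (c/(1+c)) ≤ V - 1 := by
      rw [← mul_div_assoc, div_le_iff₀ (by linarith : (0:ℝ) < 1+c)]
      nlinarith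
    nlinarith
  have hsu : U * d ≤ Real.sqrt (U^2-U) := by
    have : U * d = Real.sqrt (U^2 * (c/(1+c))) := by
      rw [Real.sqrt_mul (sq_nonneg U), Real.sqrt_sq hU0.le]
    rw [this]
    exact Real.sqrt_le_sqrt hUlow
  have hsv : V * d ≤ Real.sqrt (V^2-V) := by
    have : V * d = Real.sqrt (V^2 * (c/(1+c))) := by
      rw [Real.sqrt_mul (sq_nonneg V), Real.sqrt_sq hV0.le]
    rw [this]
    exact Real.sqrt_le_sqrt hVlow
  have hprod : U*V*(c/(1+c)) ≤ Real.sqrt (U^2-U) * Real.sqrt (V^2-V) := by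
    have h2 : U*d*(V*d) ≤ Real.sqrt (U^2-U) * Real.sqrt (V^2-V) :=
      mul_le_mul hsu hsv (by positivity) (Real.sqrt_nonneg _)
    calc U*V*(c/(1+c)) = U*d*(V*d) := by rw [← hd2]; ring
      _ ≤ _ := h2
  have hpos : 0 < U*V*(c/(1+c)) := by positivity
  calc N / (Real.sqrt (U^2-U) * Real.sqrt (V^2-V))
      ≤ N / (U*V*(c/(1+c))) := div_le_div_of_nonneg_left hN0 hpos hprod
    _ = ((1+c)/c) * (qq/(qq+e)) := by
        rw [hN, hU, hV]
        field_simp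
    _ ≤ ((1+c)/c) * (qq/e) := by
        apply mul_le_mul_of_nonneg_left _ (by positivity)
        exact div_le_div_of_nonneg_left hqq he (by linarith)
    _ = ((1+c)/c) * qq / e := by ring

lemma corr_bound_b {c qb qq e U V N X : ℝ} (hc : 0 < c) (hqb : 0 < qb) (he : 0 < e)
    (hcq : c ≤ qq) (hcb : c ≤ qb) (hqb1 : qb ≤ 1) (he1 : e < 1)
    (hU : U = (qq+e)/(qb*e)) (hV : V = 1/e) (hN : N = qq/(qb*e^2))
    (hX : X = N / (Real.sqrt (U^2-U) * Real.sqrt (V^2-V))) :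
    1 - e/c ≤ X ∧ 1 - 1/(c*U) ≤ X := by
  have hqq : 0 < qq := lt_of_lt_of_le hc hcq
  have hqqe : 0 < qq + e := by linarith
  have hU1 : 1 < U := by
    rw [hU, lt_div_iff₀ (by positivity)]
    nlinarith
  have hV1 : 1 < V := by
    rw [hV]
    rw [lt_div_iff₀ he]
    linarith
  have hU0 : 0 < U := by linarith
  have hV0 : 0 < V := by linarith
  have hN0 : 0 ≤ N := by rw [hN]; positivity
  have hsu_pos : 0 < Real.sqrt (U^2-U) := Real.sqrt_pos.mpr (by nlinarith)
  have hsv_pos : 0 < Real.sqrt (V^2-V) := Real.sqrt_pos.mpr (by nlinarith)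
  have hsu : Real.sqrt (U^2-U) ≤ U := by
    calc Real.sqrt (U^2-U) ≤ Real.sqrt (U^2) := Real.sqrt_le_sqrt (by nlinarith)
      _ = U := Real.sqrt_sq hU0.le
  have hsv : Real.sqrt (V^2-V) ≤ V := by
    calc Real.sqrt (V^2-V) ≤ Real.sqrt (V^2) := Real.sqrt_le_sqrt (by nlinarith)
      _ = V := Real.sqrt_sq hV0.le
  have hmain : qq/(qq+e) ≤ X := by
    rw [hX]
    have hprod : Real.sqrt (U^2-U) * Real.sqrt (V^2-V) ≤ U * V :=
      mul_le_mul hsu hsv hsv_pos.le hU0.le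
    calc qq/(qq+e) = N / (U*V) := by
          rw [hN, hU, hV]
          field_simp
      _ ≤ N / (Real.sqrt (U^2-U) * Real.sqrt (V^2-V)) :=
          div_le_div_of_nonneg_left hN0 (by positivity) hprod
  have hid : qq/(qq+e) = 1 - e/(qq+e) := by field_simp; ring
  constructor
  · have h1 : e/(qq+e) ≤ e/c := div_le_div_of_nonneg_left he.le hc (by linarith)
    linarith [hmain, hid ▸ hmain]
  · have hUe : U * (qb*e) = qq + e := by
      rw [hU]; field_simp
    have hcU : c * U ≤ (qq+e)/e := by
      rw [le_div_iff₀ he]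
      nlinarith [mul_nonneg (sub_nonneg.mpr hcb) (mul_pos hU0 he).le]
    have hcU0 : 0 < c * U := by positivity
    have h2 : e/(qq+e) ≤ 1/(c*U) := by
      have h3 : e/(qq+e) = 1/((qq+e)/e) := by
        field_simp
      rw [h3]
      exact one_div_le_one_div_of_le hcU0 hcU
    have := hid ▸ hmain
    linarith

/-- Lemma `LmCorEst`: correlation estimates for the three-state
absorbing chain: (a) if `U₁, V₂ ≥ 1 + c` then `Corr(η̄, η̿ | Y₀ = 1) ≤ Const · q̿/ε`
(`= Const · q̿ V₁`); (b) if `q̿ ≥ c` and `q̄ ≥ c` then for `ε` small enough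
(equivalently `U₁` large enough) `Corr ≥ 1 − ε/c` and `Corr ≥ 1 − 1/(c U₁)`. -/
theorem mc_correlation_estimates :
    -- part (a)
    (∀ c > (0:ℝ), ∃ C > (0:ℝ),
      ∀ (pb qb qq pp e : ℝ),
        0 ≤ pb → 0 < qb → 0 ≤ qq → 0 ≤ pp → 0 < e →
        pb + qb = 1 → qq + pp + e = 1 →
        ∀ (μ1 μ2 : Measure (ℕ → Fin 3)),
          IsMCLaw pb qb qq pp e 0 μ1 → IsMCLaw pb qb qq pp e 1 μ2 →
          1 + c ≤ (∫ Y, etaA Y ∂μ1) → 1 + c ≤ (∫ Y, etaB Y ∂μ2) →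
          mCorr μ1 etaA etaB ≤ C * qq / e ∧
          mCorr μ1 etaA etaB ≤ C * qq * (∫ Y, etaB Y ∂μ1)) ∧
    -- part (b)
    (∀ c > (0:ℝ), ∃ ε₀ > (0:ℝ),
      ∀ (pb qb qq pp e : ℝ),
        0 ≤ pb → 0 < qb → 0 ≤ qq → 0 ≤ pp → 0 < e →
        pb + qb = 1 → qq + pp + e = 1 →
        c ≤ qq → c ≤ qb → e < ε₀ →
        ∀ (μ1 μ2 : Measure (ℕ → Fin 3)),
          IsMCLaw pb qb qq pp e 0 μ1 → IsMCLaw pb qb qq pp e 1 μ2 →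
          1 - e / c ≤ mCorr μ1 etaA etaB ∧
          1 - 1 / (c * (∫ Y, etaA Y ∂μ1)) ≤ mCorr μ1 etaA etaB) := by
  constructor
  · -- part (a)
    intro c hc
    refine ⟨(1+c)/c, by positivity, ?_⟩
    intro pb qb qq pp e hpb hqb hqq hpp he h1 h2 μ1 μ2 hμ1 hμ2 hA hB
    have hP : Par pb qb qq pp e := ⟨hpb, hqb, hqq, hpp, he, h1, h2⟩
    obtain ⟨h00, h01, h10, h11⟩ := tt_vals hP
    have hIA : ∫ Y, etaA Y ∂μ1 = (qq+e)/(qb*e) := by rw [integral_etaA hP hμ1, h00]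
    have hIB1 : ∫ Y, etaB Y ∂μ1 = 1/e := by rw [integral_etaB hP hμ1, h01]
    have hIB2 : ∫ Y, etaB Y ∂μ2 = 1/e := by rw [integral_etaB hP hμ2, h11]
    have hcorr : mCorr μ1 etaA etaB
        = (qq/(qb*e^2)) / (Real.sqrt (((qq+e)/(qb*e))^2 - (qq+e)/(qb*e))
            * Real.sqrt ((1/e)^2 - 1/e)) := by
      unfold mCorr
      rw [mCov_AB hP hμ1, mCov_AA hP hμ1, mCov_BB hP hμ1]
    have hUc : 1 + c ≤ (qq+e)/(qb*e) := by rw [← hIA]; exact hA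
    have hVc : 1 + c ≤ 1/e := by rw [← hIB2]; exact hB
    have key := corr_bound_a hc hqb hqq he rfl rfl rfl hUc hVc
    constructor
    · rw [hcorr]; exact key
    · rw [hcorr, hIB1]
      have hrw : (1+c)/c * qq * (1/e) = ((1+c)/c) * qq / e := by ring
      rw [hrw]
      exact key
  · -- part (b)
    intro c hc
    refine ⟨1, one_pos, ?_⟩
    intro pb qb qq pp e hpb hqb hqq hpp he h1 h2 hcq hcb he1 μ1 μ2 hμ1 hμ2
    have hP : Par pb qb qq pp e := ⟨hpb, hqb, hqq, hpp, he, h1, h2⟩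
    obtain ⟨h00, h01, h10, h11⟩ := tt_vals hP
    have hIA : ∫ Y, etaA Y ∂μ1 = (qq+e)/(qb*e) := by rw [integral_etaA hP hμ1, h00]
    have hcorr : mCorr μ1 etaA etaB
        = (qq/(qb*e^2)) / (Real.sqrt (((qq+e)/(qb*e))^2 - (qq+e)/(qb*e))
            * Real.sqrt ((1/e)^2 - 1/e)) := by
      unfold mCorr
      rw [mCov_AB hP hμ1, mCov_AA hP hμ1, mCov_BB hP hμ1]
    have hqb1 : qb ≤ 1 := by nlinarith [hpb, h1]
    have he1' : e < 1 := by nlinarith [hcq, hpp, hc]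
    obtain ⟨b1, b2⟩ := corr_bound_b hc hqb he hcq hcb hqb1 he1' rfl rfl rfl hcorr
    exact ⟨b1, by rw [hIA]; exact b2⟩


end MC3
end
end
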